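/- arXiv:2601.19845 — 7 statements merged into one kernel-verified Lean document; each statement's English description precedes it below -/
import Mathlib

section
/- For every nonnegative integer m, the sum over i from 0 to m of q^i · (q;q²)_i (q;q²)_{m-i} / ((q²;q²)_i (q²;q²)_{m-i}) equals 1, as an identity of rational functions (equivalently, of formal power series) in q. -/
open Finset

/-- `(q^a; q^2)_n = ∏_{k<n} (1 - q^(a+2k))` as a rational function in `q`. -/
noncomputable def qPoch2 (a n : ℕ) : RatFunc ℚ :=
  ∏ k ∈ Finset.range n, (1 - (RatFunc.X : RatFunc ℚ) ^ (a + 2 * k))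

lemma xpow_ne_one {k : ℕ} (hk : k ≠ 0) : (RatFunc.X : RatFunc ℚ) ^ k ≠ 1 := by
  intro h
  rw [← RatFunc.algebraMap_X (K := ℚ), ← map_pow,
    ← map_one (algebraMap (Polynomial ℚ) (RatFunc ℚ))] at h
  have := congrArg Polynomial.natDegree (RatFunc.algebraMap_injective (K := ℚ) h)
  simp [Polynomial.natDegree_X_pow] at this
  exact hk this

lemma one_sub_xpow_ne {k : ℕ} (hk : k ≠ 0) : (1 : RatFunc ℚ) - RatFunc.X ^ k ≠ 0 :=
  sub_ne_zero.mpr (Ne.symm (xpow_ne_one hk))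

lemma qPoch2_ne_zero {a : ℕ} (ha : a ≠ 0) (n : ℕ) : qPoch2 a n ≠ 0 := by
  unfold qPoch2
  rw [Finset.prod_ne_zero_iff]
  intro k _
  exact one_sub_xpow_ne (by omega)

lemma qPoch2_succ (a n : ℕ) :
    qPoch2 a (n + 1) = qPoch2 a n * (1 - (RatFunc.X : RatFunc ℚ) ^ (a + 2 * n)) :=
  Finset.prod_range_succ _ _

/-- `(q;q²)_n / (q²;q²)_n`. -/
noncomputable def qA (n : ℕ) : RatFunc ℚ := qPoch2 1 n / qPoch2 2 n

lemma qA_zero : qA 0 = 1 := by simp [qA, qPoch2]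

/-- The WZ-style local certificate identity. -/
lemma key (n i : ℕ) :
    (RatFunc.X : RatFunc ℚ) ^ i * qA i * qA (n + 1) - RatFunc.X ^ i * qA i * qA n
      = -(RatFunc.X ^ (i+1) * qA (i+1) * qA n * RatFunc.X ^ (2*n) * (1 - RatFunc.X ^ (2*(i+1))))
          / (1 - RatFunc.X ^ (2*(n+i+1)))
        - -(RatFunc.X ^ i * qA i * qA (n+1) * RatFunc.X ^ (2*(n+1)) * (1 - RatFunc.X ^ (2*i)))
          / (1 - RatFunc.X ^ (2*(n+i+1))) := by
  have h1 := qPoch2_ne_zero (a := 2) two_ne_zero n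
  have h2 := qPoch2_ne_zero (a := 2) two_ne_zero i
  have h3 : (1 : RatFunc ℚ) - RatFunc.X ^ (2 + 2*n) ≠ 0 := one_sub_xpow_ne (by omega)
  have h4 : (1 : RatFunc ℚ) - RatFunc.X ^ (2 + 2*i) ≠ 0 := one_sub_xpow_ne (by omega)
  have h5 : (1 : RatFunc ℚ) - RatFunc.X ^ (2*(n+i+1)) ≠ 0 := one_sub_xpow_ne (by omega)
  have hx : (RatFunc.X : RatFunc ℚ) ^ (2*(n+i+1))
      = RatFunc.X ^ (2*n) * RatFunc.X ^ (2*i) * RatFunc.X ^ 2 := by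
    rw [← pow_add, ← pow_add]; ring_nf
  rw [div_sub_div_same, eq_div_iff h5]
  unfold qA
  rw [qPoch2_succ 1 n, qPoch2_succ 2 n, qPoch2_succ 1 i, qPoch2_succ 2 i, hx]
  field_simp
  ring

/-- For every nonnegative integer `m`,
`∑_{i=0}^m q^i (q;q²)_i (q;q²)_{m-i} / ((q²;q²)_i (q²;q²)_{m-i}) = 1`
as rational functions in `q`. -/
theorem stmt_0 (m : ℕ) :
    ∑ i ∈ Finset.range (m + 1),
      (RatFunc.X : RatFunc ℚ) ^ i * qPoch2 1 i * qPoch2 1 (m - i) /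
        (qPoch2 2 i * qPoch2 2 (m - i)) = 1 := by
  have hterm : ∀ k j : ℕ,
      (RatFunc.X : RatFunc ℚ) ^ j * qPoch2 1 j * qPoch2 1 (k - j) /
        (qPoch2 2 j * qPoch2 2 (k - j)) = RatFunc.X ^ j * qA j * qA (k - j) := by
    intro k j
    have h1 := qPoch2_ne_zero (a := 2) two_ne_zero j
    have h2 := qPoch2_ne_zero (a := 2) two_ne_zero (k - j)
    unfold qA
    field_simp
  induction m with
  | zero => simp [qPoch2]
  | succ m ih =>
    rw [Finset.sum_congr rfl (fun j _ => hterm (m+1) j)]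
    rw [Finset.sum_congr rfl (fun j _ => hterm m j)] at ih
    set G : ℕ → RatFunc ℚ := fun i =>
      -(RatFunc.X ^ i * qA i * qA (m+1-i) * RatFunc.X ^ (2*(m+1-i)) * (1 - RatFunc.X ^ (2*i)))
        / (1 - RatFunc.X ^ (2*(m+1))) with hG
    have hdiff : ∀ i ∈ Finset.range (m+1),
        (RatFunc.X : RatFunc ℚ) ^ i * qA i * qA (m+1-i) - RatFunc.X ^ i * qA i * qA (m-i)
          = G (i+1) - G i := by
      intro i hi
      rw [Finset.mem_range] at hi
      have e1 : m + 1 - i = (m - i) + 1 := by omega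
      have e2 : m + 1 - (i + 1) = m - i := by omega
      have e3 : 2 * (m + 1) = 2 * ((m - i) + i + 1) := by omega
      rw [hG]
      simp only [e1, e2, e3]
      exact key (m - i) i
    have hG0 : G 0 = 0 := by simp [hG]
    have hGlast : (RatFunc.X : RatFunc ℚ) ^ (m+1) * qA (m+1) * qA (m+1-(m+1)) = - G (m+1) := by
      rw [hG]
      simp only [Nat.sub_self, qA_zero, mul_one, Nat.mul_zero, pow_zero, neg_neg, neg_div]
      rw [mul_div_assoc, div_self (one_sub_xpow_ne (by omega)), mul_one]
    have htel : ∑ i ∈ Finset.range (m+1), (G (i+1) - G i) = G (m+1) - G 0 :=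
      Finset.sum_range_sub G (m+1)
    rw [Finset.sum_range_succ]
    have hkey : ∑ i ∈ Finset.range (m+1), (RatFunc.X : RatFunc ℚ) ^ i * qA i * qA (m+1-i)
        = ∑ i ∈ Finset.range (m+1), ((RatFunc.X : RatFunc ℚ) ^ i * qA i * qA (m-i))
          + (G (m+1) - G 0) := by
      rw [← htel, ← Finset.sum_add_distrib]
      exact Finset.sum_congr rfl fun i hi => by linear_combination hdiff i hi
    rw [hkey, ih, hGlast, hG0]
    ring
end

section
/- For every nonnegative integer m and parameters a, c (with the relevant denominators nonzero), the identity ∑_{n=0}^{m} (a;q)_n (q^{-m};q)_n q^n / ((q;q)_n (c;q)_n) = a^m (c/a;q)_m / (c;q)_m holds (the second Chu–Vandermonde sum). -/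
open Finset

private def tt {F : Type*} [Field F] (q a c : F) (M n : ℕ) : F :=
  (∏ k ∈ Finset.range n, (1 - a * q ^ k)) *
    (∏ k ∈ Finset.range n, (1 - (q ^ M)⁻¹ * q ^ k)) * q ^ n /
    ((∏ k ∈ Finset.range n, (1 - q ^ (k + 1))) *
      ∏ k ∈ Finset.range n, (1 - c * q ^ k))

private def GG {F : Type*} [Field F] (q a c : F) (m n : ℕ) : F :=
  (∏ k ∈ Finset.range (n + 1), (1 - a * q ^ k)) *
    (∏ k ∈ Finset.range n, (1 - (q ^ m)⁻¹ * q ^ k)) /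
    ((∏ k ∈ Finset.range n, (1 - q ^ (k + 1))) *
      (∏ k ∈ Finset.range n, (1 - c * q ^ k)) * (1 - c * q ^ m))

private lemma Qshift {F : Type*} [Field F] {q : F} (hq : q ≠ 0) (m j : ℕ) :
    ∏ k ∈ Finset.range (j + 1), (1 - (q ^ (m + 1))⁻¹ * q ^ k)
      = (1 - (q ^ (m + 1))⁻¹) * ∏ k ∈ Finset.range j, (1 - (q ^ m)⁻¹ * q ^ k) := by
  rw [Finset.prod_range_succ', mul_comm]
  congr 1
  · simp
  · refine Finset.prod_congr rfl fun k _ => ?_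
    have h : (q ^ (m + 1))⁻¹ * q ^ (k + 1) = (q ^ m)⁻¹ * q ^ k := by
      have hqm : q ^ m ≠ 0 := pow_ne_zero _ hq
      have hqm1 : q ^ (m + 1) ≠ 0 := pow_ne_zero _ hq
      field_simp
      ring
    rw [h]

private lemma Qtop {F : Type*} [Field F] {q : F} (hq : q ≠ 0) (m : ℕ) :
    ∏ k ∈ Finset.range (m + 1), (1 - (q ^ m)⁻¹ * q ^ k) = 0 :=
  Finset.prod_eq_zero (Finset.self_mem_range_succ m)
    (by rw [inv_mul_cancel₀ (pow_ne_zero m hq), sub_self])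

private lemma tt_top {F : Type*} [Field F] {q : F} (a c : F) (hq : q ≠ 0) (m : ℕ) :
    tt q a c m (m + 1) = 0 := by
  simp [tt, Qtop hq]

private lemma GG_top {F : Type*} [Field F] {q : F} (a c : F) (hq : q ≠ 0) (m : ℕ) :
    GG q a c m (m + 1) = 0 := by
  simp [GG, Qtop hq]

private lemma Qfrac {F : Type*} [Field F] {q : F} (hq : q ≠ 0) (M n : ℕ) :
    ∏ k ∈ Finset.range n, (1 - (q ^ M)⁻¹ * q ^ k)
      = (∏ k ∈ Finset.range n, (q ^ M - q ^ k)) / (q ^ M) ^ n := by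
  have h : ∀ k ∈ Finset.range n, (1 - (q ^ M)⁻¹ * q ^ k) = (q ^ M - q ^ k) / q ^ M := by
    intro k _
    have hM : q ^ M ≠ 0 := pow_ne_zero _ hq
    field_simp
  rw [Finset.prod_congr rfl h, Finset.prod_div_distrib, Finset.prod_const,
    Finset.card_range]

set_option maxHeartbeats 1000000 in
private lemma step {F : Type*} [Field F] {q a c : F} (hq : q ≠ 0) (m j : ℕ)
    (hP : (∏ k ∈ Finset.range (j + 1), (1 - q ^ (k + 1))) ≠ 0)
    (hC : (∏ k ∈ Finset.range (j + 1), (1 - c * q ^ k)) ≠ 0)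
    (hcy : (1 - c * q ^ m) ≠ 0) :
    tt q a c (m + 1) (j + 1) - (a - c * q ^ m) / (1 - c * q ^ m) * tt q a c m (j + 1)
      = GG q a c m (j + 1) - GG q a c m j := by
  have hPj : (∏ k ∈ Finset.range j, (1 - q ^ (k + 1))) ≠ 0 := by
    rw [Finset.prod_range_succ] at hP; exact left_ne_zero_of_mul hP
  have hqj : (1 - q ^ (j + 1)) ≠ 0 := by
    rw [Finset.prod_range_succ] at hP; exact right_ne_zero_of_mul hP
  have hCj : (∏ k ∈ Finset.range j, (1 - c * q ^ k)) ≠ 0 := by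
    rw [Finset.prod_range_succ] at hC; exact left_ne_zero_of_mul hC
  have hcj : (1 - c * q ^ j) ≠ 0 := by
    rw [Finset.prod_range_succ] at hC; exact right_ne_zero_of_mul hC
  have hqm : q ^ m ≠ 0 := pow_ne_zero _ hq
  have hqm1 : q ^ (m + 1) ≠ 0 := pow_ne_zero _ hq
  have hqmj : (q ^ m) ^ j ≠ 0 := pow_ne_zero _ hqm
  have hqmj1 : (q ^ m) ^ (j + 1) ≠ 0 := pow_ne_zero _ hqm
  set PA := ∏ k ∈ Finset.range j, (1 - a * q ^ k) with hPA
  set PQ := ∏ k ∈ Finset.range j, (q ^ m - q ^ k) with hPQ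
  set PP := ∏ k ∈ Finset.range j, (1 - q ^ (k + 1)) with hPP
  set PC := ∏ k ∈ Finset.range j, (1 - c * q ^ k) with hPC
  have hDne : (q ^ m) ^ j * PP * PC * q ^ (m + 1) * q ^ m * (1 - q ^ (j + 1)) *
      (1 - c * q ^ j) * (1 - c * q ^ m) ≠ 0 :=
    mul_ne_zero (mul_ne_zero (mul_ne_zero (mul_ne_zero (mul_ne_zero (mul_ne_zero
      (mul_ne_zero hqmj hPj) hCj) hqm1) hqm) hqj) hcj) hcy
  have hden1 : PP * (1 - q ^ (j + 1)) * (PC * (1 - c * q ^ j)) ≠ 0 :=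
    mul_ne_zero (mul_ne_zero hPj hqj) (mul_ne_zero hCj hcj)
  have hinv : (1 - (q ^ (m + 1))⁻¹) = (q ^ (m + 1) - 1) / q ^ (m + 1) := by
    field_simp
  have h1 : tt q a c (m + 1) (j + 1)
      = PA * PQ * (1 - a * q ^ j) * (q ^ (m + 1) - 1) * q ^ (j + 1) * q ^ m *
          (1 - c * q ^ m) /
        ((q ^ m) ^ j * PP * PC * q ^ (m + 1) * q ^ m * (1 - q ^ (j + 1)) *
          (1 - c * q ^ j) * (1 - c * q ^ m)) := by
    unfold tt
    rw [Qshift hq, Qfrac hq m j, hinv,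
      Finset.prod_range_succ (fun k => 1 - a * q ^ k),
      Finset.prod_range_succ (fun k => 1 - q ^ (k + 1)),
      Finset.prod_range_succ (fun k => 1 - c * q ^ k), ← hPA, ← hPP, ← hPC, ← hPQ]
    rw [div_eq_div_iff hden1 hDne]
    field_simp
  have h2 : (a - c * q ^ m) / (1 - c * q ^ m) * tt q a c m (j + 1)
      = (a - c * q ^ m) * PA * (1 - a * q ^ j) * PQ * (q ^ m - q ^ j) * q ^ (j + 1) *
          q ^ (m + 1) /
        ((q ^ m) ^ j * PP * PC * q ^ (m + 1) * q ^ m * (1 - q ^ (j + 1)) *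
          (1 - c * q ^ j) * (1 - c * q ^ m)) := by
    unfold tt
    rw [Qfrac hq m (j + 1),
      Finset.prod_range_succ (fun k => 1 - a * q ^ k),
      Finset.prod_range_succ (fun k => q ^ m - q ^ k),
      Finset.prod_range_succ (fun k => 1 - q ^ (k + 1)),
      Finset.prod_range_succ (fun k => 1 - c * q ^ k), ← hPA, ← hPP, ← hPC, ← hPQ]
    rw [div_mul_div_comm, div_eq_div_iff (mul_ne_zero hcy hden1) hDne]
    field_simp
    ring
  have h3 : GG q a c m (j + 1)
      = PA * (1 - a * q ^ j) * (1 - a * q ^ (j + 1)) * PQ * (q ^ m - q ^ j) *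
          q ^ (m + 1) /
        ((q ^ m) ^ j * PP * PC * q ^ (m + 1) * q ^ m * (1 - q ^ (j + 1)) *
          (1 - c * q ^ j) * (1 - c * q ^ m)) := by
    unfold GG
    rw [Qfrac hq m (j + 1),
      Finset.prod_range_succ (fun k => 1 - a * q ^ k) (j + 1),
      Finset.prod_range_succ (fun k => 1 - a * q ^ k) j,
      Finset.prod_range_succ (fun k => q ^ m - q ^ k),
      Finset.prod_range_succ (fun k => 1 - q ^ (k + 1)),
      Finset.prod_range_succ (fun k => 1 - c * q ^ k), ← hPA, ← hPP, ← hPC, ← hPQ]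
    rw [div_eq_div_iff (mul_ne_zero hden1 hcy) hDne]
    field_simp
    ring
  have h4 : GG q a c m j
      = PA * (1 - a * q ^ j) * PQ * q ^ (m + 1) * q ^ m * (1 - q ^ (j + 1)) *
          (1 - c * q ^ j) /
        ((q ^ m) ^ j * PP * PC * q ^ (m + 1) * q ^ m * (1 - q ^ (j + 1)) *
          (1 - c * q ^ j) * (1 - c * q ^ m)) := by
    unfold GG
    rw [Qfrac hq m j,
      Finset.prod_range_succ (fun k => 1 - a * q ^ k), ← hPA, ← hPP, ← hPC, ← hPQ]
    rw [div_eq_div_iff (mul_ne_zero (mul_ne_zero hPj hCj) hcy) hDne]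
    field_simp
  rw [h1, h2, h3, h4, div_sub_div_same, div_sub_div_same]
  have hN : PA * PQ * (1 - a * q ^ j) * (q ^ (m + 1) - 1) * q ^ (j + 1) * q ^ m *
        (1 - c * q ^ m) -
      (a - c * q ^ m) * PA * (1 - a * q ^ j) * PQ * (q ^ m - q ^ j) * q ^ (j + 1) *
        q ^ (m + 1)
      = PA * (1 - a * q ^ j) * (1 - a * q ^ (j + 1)) * PQ * (q ^ m - q ^ j) *
          q ^ (m + 1) -
        PA * (1 - a * q ^ j) * PQ * q ^ (m + 1) * q ^ m * (1 - q ^ (j + 1)) *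
          (1 - c * q ^ j) := by ring
  rw [hN]

/-- The second Chu–Vandermonde sum:
`∑_{n=0}^{m} (a;q)_n (q^{-m};q)_n q^n / ((q;q)_n (c;q)_n) = a^m (c/a;q)_m / (c;q)_m`,
for elements of a field with the relevant denominators nonzero. -/
theorem stmt_2 {F : Type*} [Field F] (q a c : F) (m : ℕ)
    (hq : q ≠ 0) (ha : a ≠ 0)
    (hqq : ∀ n ≤ m, ∏ k ∈ Finset.range n, (1 - q ^ (k + 1)) ≠ 0)
    (hc : ∀ n ≤ m, ∏ k ∈ Finset.range n, (1 - c * q ^ k) ≠ 0) :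
    ∑ n ∈ Finset.range (m + 1),
      (∏ k ∈ Finset.range n, (1 - a * q ^ k)) *
        (∏ k ∈ Finset.range n, (1 - (q ^ m)⁻¹ * q ^ k)) * q ^ n /
        ((∏ k ∈ Finset.range n, (1 - q ^ (k + 1))) *
          ∏ k ∈ Finset.range n, (1 - c * q ^ k))
      = a ^ m * (∏ k ∈ Finset.range m, (1 - c / a * q ^ k)) /
          ∏ k ∈ Finset.range m, (1 - c * q ^ k) := by
  revert hqq hc
  induction m with
  | zero =>
    intro hqq hc
    simp
  | succ m ih =>
    intro hqq hc
    have hqq' : ∀ n ≤ m, ∏ k ∈ Finset.range n, (1 - q ^ (k + 1)) ≠ 0 :=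
      fun n hn => hqq n (hn.trans (Nat.le_succ m))
    have hc' : ∀ n ≤ m, ∏ k ∈ Finset.range n, (1 - c * q ^ k) ≠ 0 :=
      fun n hn => hc n (hn.trans (Nat.le_succ m))
    have ihm : ∑ n ∈ Finset.range (m + 1), tt q a c m n
        = a ^ m * (∏ k ∈ Finset.range m, (1 - c / a * q ^ k)) /
          ∏ k ∈ Finset.range m, (1 - c * q ^ k) := ih hqq' hc'
    have hcy : (1 - c * q ^ m) ≠ 0 := by
      have h := hc (m + 1) le_rfl
      rw [Finset.prod_range_succ] at h
      exact right_ne_zero_of_mul h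
    have hCm : (∏ k ∈ Finset.range m, (1 - c * q ^ k)) ≠ 0 := hc m (Nat.le_succ m)
    have tele : ∑ n ∈ Finset.range (m + 2),
        (tt q a c (m + 1) n - (a - c * q ^ m) / (1 - c * q ^ m) * tt q a c m n) = 0 := by
      rw [Finset.sum_range_succ']
      have e1 : ∀ i ∈ Finset.range (m + 1),
          (tt q a c (m + 1) (i + 1) - (a - c * q ^ m) / (1 - c * q ^ m) * tt q a c m (i + 1))
            = GG q a c m (i + 1) - GG q a c m i := by
        intro i hi
        have hi' : i + 1 ≤ m + 1 := Finset.mem_range.mp hi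
        exact step hq m i (hqq (i + 1) hi') (hc (i + 1) hi') hcy
      rw [Finset.sum_congr rfl e1, Finset.sum_range_sub (GG q a c m)]
      have h0 : tt q a c (m + 1) 0 - (a - c * q ^ m) / (1 - c * q ^ m) * tt q a c m 0
          = GG q a c m 0 := by
        simp only [tt, GG, Finset.range_zero, Finset.prod_empty, Finset.prod_range_one,
          pow_zero, one_mul, mul_one]
        field_simp
        rw [zero_add, Finset.prod_range_one, pow_zero, mul_one]; ring
      rw [h0, GG_top a c hq]
      ring
    have hsplit : ∑ n ∈ Finset.range (m + 2), tt q a c (m + 1) n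
        = (a - c * q ^ m) / (1 - c * q ^ m) * ∑ n ∈ Finset.range (m + 1), tt q a c m n := by
      rw [Finset.sum_sub_distrib, ← Finset.mul_sum, sub_eq_zero] at tele
      rw [tele, Finset.sum_range_succ, tt_top a c hq, add_zero]
    show ∑ n ∈ Finset.range (m + 1 + 1), tt q a c (m + 1) n = _
    rw [hsplit, ihm, Finset.prod_range_succ (fun k => 1 - c / a * q ^ k),
      Finset.prod_range_succ (fun k => 1 - c * q ^ k), pow_succ]
    field_simp
end

section
/- For every positive integer n, the formal power series (q²;q²)_n / (q;q²)_n² in ℤ[[q]] (or ℝ[[q]]) has all coefficients strictly positive. -/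
open Finset PowerSeries

/-- `(q^a; q^2)_n = ∏_{j<n} (1 - q^(a+2j))` as a formal power series in `q`. -/
noncomputable def P2 (a n : ℕ) : PowerSeries ℚ :=
  ∏ j ∈ Finset.range n, (1 - (PowerSeries.X : PowerSeries ℚ) ^ (a + 2 * j))

namespace Stmt3Aux

noncomputable section

abbrev PS := PowerSeries ℚ

/-- geometric series `1/(1-q^a)` (for `a ≥ 1`). -/
def g (a : ℕ) : PS := PowerSeries.mk fun m => if a ∣ m then 1 else 0

/-- `∏_{i=j}^{n} (1 - q^{2i})`. -/
def Nn (n j : ℕ) : PS :=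
  ∏ i ∈ Finset.range (n + 1 - j), (1 - (PowerSeries.X : PS) ^ (2 * (j + i)))

def prodG (M : Multiset ℕ) : PS := (M.map g).prod

def S (n j : ℕ) (M : Multiset ℕ) : PS := Nn n j * prodG M

/-- tail multiset: `c` pairs starting at `t` stepping by 2. -/
def Tc : ℕ → ℕ → Multiset ℕ
  | 0, _ => 0
  | c + 1, t => t ::ₘ t ::ₘ Tc c (t + 2)

/-- odd-step state multisets. -/
def MO (j : ℕ) : ℕ → ℕ → Multiset ℕ
  | 0, c => Tc c j
  | 1, c => (j - 2) ::ₘ ((Tc c j).erase j)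
  | k + 2, c => ((j - (2 * k + 4)) ::ₘ MO j k c).erase (j + (2 * k + 2))

/-- even-step state multisets. -/
def ME (j : ℕ) : ℕ → ℕ → Multiset ℕ
  | 0, c => (j - 1) ::ₘ Tc c (j + 1)
  | 1, c => (j - 3) ::ₘ Tc c (j + 1)
  | k + 2, c => ((j - (2 * k + 5)) ::ₘ ME j k c).erase (j + (2 * k + 1))

def NN (f : PS) : Prop := ∀ m, 0 ≤ PowerSeries.coeff (R := ℚ) m f
def PP (f : PS) : Prop := ∀ m, 0 < PowerSeries.coeff (R := ℚ) m f

/-! ### basic positivity lemmas -/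

lemma NN_g (a : ℕ) : NN (g a) := by
  intro m; simp only [g, coeff_mk]; split <;> norm_num

lemma NN_add {f h : PS} (hf : NN f) (hh : NN h) : NN (f + h) := by
  intro m; rw [map_add]; exact add_nonneg (hf m) (hh m)

lemma NN_mul {f h : PS} (hf : NN f) (hh : NN h) : NN (f * h) := by
  intro m
  rw [PowerSeries.coeff_mul]
  exact Finset.sum_nonneg fun p _ => mul_nonneg (hf p.1) (hh p.2)

lemma NN_Xpow (a : ℕ) : NN ((PowerSeries.X : PS) ^ a) := by
  intro m; rw [PowerSeries.coeff_X_pow]; split <;> norm_num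

lemma NN_onePlusXpow (a : ℕ) : NN (1 + (PowerSeries.X : PS) ^ a) := by
  intro m
  rw [map_add]
  have := NN_Xpow a m
  have h1 : (0:ℚ) ≤ PowerSeries.coeff (R := ℚ) m 1 := by
    rw [PowerSeries.coeff_one]; split <;> norm_num
  linarith

lemma g_cancel {a : ℕ} (ha : a ≠ 0) : (1 - (PowerSeries.X : PS) ^ a) * g a = 1 := by
  rw [mul_comm]
  ext m
  rw [mul_sub, mul_one, map_sub, PowerSeries.coeff_mul_X_pow']
  simp only [g, coeff_mk, PowerSeries.coeff_one]
  rcases Nat.eq_zero_or_pos m with hm | hm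
  · subst hm
    have : ¬ a ≤ 0 := by omega
    simp [this]
  · have hm0 : m ≠ 0 := by omega
    simp only [hm0, if_false]
    by_cases hle : a ≤ m
    · simp only [hle, if_true]
      have hiff : a ∣ m ↔ a ∣ m - a := by
        constructor
        · intro h; exact Nat.dvd_sub h dvd_rfl
        · intro h
          have : m = m - a + a := by omega
          rw [this]; exact dvd_add h dvd_rfl
      by_cases hd : a ∣ m
      · simp [hd, hiff.mp hd]
      · have hnd2 : ¬ a ∣ m - a := fun h => hd (hiff.mpr h)
        simp [hd, hnd2]
    · have hnd : ¬ a ∣ m := by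
        intro h
        exact hle (Nat.le_of_dvd hm h)
      simp [hle, hnd]

lemma prodG_cons (a : ℕ) (M : Multiset ℕ) : prodG (a ::ₘ M) = g a * prodG M := by
  simp [prodG]

lemma prodG_erase {a : ℕ} {M : Multiset ℕ} (h : a ∈ M) :
    prodG M = g a * prodG (M.erase a) := by
  rw [prodG, prodG, ← Multiset.prod_map_erase (f := g) h]

lemma NN_prodG (M : Multiset ℕ) : NN (prodG M) := by
  induction M using Multiset.induction_on with
  | empty =>
    intro m; rw [prodG]; simp only [Multiset.map_zero, Multiset.prod_zero]
    rw [PowerSeries.coeff_one]; split <;> norm_num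
  | cons a M ih => rw [prodG_cons]; exact NN_mul (NN_g a) ih

lemma constantCoeff_prodG (M : Multiset ℕ) : PowerSeries.constantCoeff (R := ℚ) (prodG M) = 1 := by
  induction M using Multiset.induction_on with
  | empty => simp [prodG]
  | cons a M ih =>
    rw [prodG_cons, map_mul, ih, mul_one]
    rw [← PowerSeries.coeff_zero_eq_constantCoeff_apply]
    simp [g]

lemma PP_g1_mul {h : PS} (hh : NN h) (h0 : PowerSeries.coeff (R := ℚ) 0 h = 1) : PP (g 1 * h) := by
  intro m
  rw [PowerSeries.coeff_mul]
  have hmem : (m, 0) ∈ Finset.HasAntidiagonal.antidiagonal m := by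
    simp
  have hterm : PowerSeries.coeff (R := ℚ) m (g 1) * PowerSeries.coeff (R := ℚ) 0 h = 1 := by
    rw [h0, mul_one]; simp [g]
  have hle : (1:ℚ) ≤ ∑ p ∈ Finset.HasAntidiagonal.antidiagonal m,
      PowerSeries.coeff (R := ℚ) p.1 (g 1) * PowerSeries.coeff (R := ℚ) p.2 h := by
    rw [← hterm]
    exact Finset.single_le_sum (f := fun p : ℕ × ℕ =>
      PowerSeries.coeff (R := ℚ) p.1 (g 1) * PowerSeries.coeff (R := ℚ) p.2 h)
      (fun p _ => mul_nonneg (NN_g 1 p.1) (hh p.2)) hmem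
  linarith

lemma PP_add_NN {f h : PS} (hf : PP f) (hh : NN h) : PP (f + h) := by
  intro m; rw [map_add]; have := hf m; have := hh m; linarith

lemma PP_onePlusXpow_mul {f : PS} (a : ℕ) (hf : PP f) : PP ((1 + (PowerSeries.X : PS) ^ a) * f) := by
  rw [add_mul, one_mul]
  exact PP_add_NN hf (NN_mul (NN_Xpow a) (fun m => le_of_lt (hf m)))

/-! ### numerator lemmas -/

lemma Nn_succ {n j : ℕ} (h : j ≤ n) :
    Nn n j = (1 - (PowerSeries.X : PS) ^ (2 * j)) * Nn n (j + 1) := by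
  have h1 : n + 1 - j = (n - j) + 1 := by omega
  have h2 : n + 1 - (j + 1) = n - j := by omega
  rw [Nn, Nn, h1, h2, Finset.prod_range_succ', mul_comm]
  congr 1
  apply Finset.prod_congr rfl
  intro i _
  have : 2 * (j + (i + 1)) = 2 * (j + 1 + i) := by ring
  rw [this]

lemma Nn_top (n : ℕ) : Nn n (n + 1) = 1 := by
  rw [Nn]
  have : n + 1 - (n + 1) = 0 := by omega
  rw [this]; simp

lemma NN_S_top (n : ℕ) (M : Multiset ℕ) : NN (S n (n + 1) M) := by
  rw [S, Nn_top, one_mul]; exact NN_prodG M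

lemma PP_S_top (n : ℕ) {M : Multiset ℕ} (h : 1 ∈ M) : PP (S n (n + 1) M) := by
  rw [S, Nn_top, one_mul, prodG_erase h]
  exact PP_g1_mul (NN_prodG _) (by
    have := constantCoeff_prodG (M.erase 1)
    simpa [PowerSeries.coeff_zero_eq_constantCoeff] using this)

/-! ### transition identities at the series level -/

lemma S_TO {n j : ℕ} (M : Multiset ℕ) (hjn : j ≤ n) (hj0 : j ≠ 0) (hmem : j ∈ M) :
    S n j M = (1 + (PowerSeries.X : PS) ^ j) * S n (j + 1) (M.erase j) := by
  rw [S, S, Nn_succ hjn, prodG_erase hmem]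
  have hfac : (1 - (PowerSeries.X : PS) ^ (2 * j))
      = (1 + (PowerSeries.X : PS) ^ j) * (1 - (PowerSeries.X : PS) ^ j) := by
    rw [two_mul, pow_add]; ring
  rw [hfac]
  have : (1 + (PowerSeries.X : PS) ^ j) * (1 - (PowerSeries.X : PS) ^ j) * Nn n (j + 1) *
      (g j * prodG (M.erase j)) = (1 + (PowerSeries.X : PS) ^ j) *
        (((1 - (PowerSeries.X : PS) ^ j) * g j) * (Nn n (j + 1) * prodG (M.erase j))) := by
    ring
  rw [this, g_cancel hj0, one_mul]

lemma S_TE {n j a b : ℕ} (M : Multiset ℕ) (hjn : j ≤ n) (ha0 : a ≠ 0) (hb0 : b ≠ 0)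
    (hab : a + b = 2 * j) (haM : a ∈ M) (hbM : b ∈ M) :
    S n j M = S n (j + 1) (M.erase a) + (PowerSeries.X : PS) ^ a * S n (j + 1) (M.erase b) := by
  rw [S, Nn_succ hjn]
  have hsplit : (1 - (PowerSeries.X : PS) ^ (2 * j))
      = (1 - (PowerSeries.X : PS) ^ a)
        + (PowerSeries.X : PS) ^ a * (1 - (PowerSeries.X : PS) ^ b) := by
    rw [mul_sub, mul_one, ← pow_add, hab]; ring
  rw [hsplit, add_mul, add_mul]
  congr 1
  · rw [S, prodG_erase haM]
    have : (1 - (PowerSeries.X : PS) ^ a) * Nn n (j + 1) * (g a * prodG (M.erase a))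
        = (((1 - (PowerSeries.X : PS) ^ a) * g a)) * (Nn n (j + 1) * prodG (M.erase a)) := by
      ring
    rw [this, g_cancel ha0, one_mul]
  · rw [S, prodG_erase hbM]
    have : (PowerSeries.X : PS) ^ a * (1 - (PowerSeries.X : PS) ^ b) * Nn n (j + 1) *
        (g b * prodG (M.erase b)) = (PowerSeries.X : PS) ^ a *
          ((((1 - (PowerSeries.X : PS) ^ b) * g b)) * (Nn n (j + 1) * prodG (M.erase b))) := by
      ring
    rw [this, g_cancel hb0, one_mul]

/-! ### multiset lemmas -/

lemma mem_Tc {c t i : ℕ} (h : i < c) : t + 2 * i ∈ Tc c t := by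
  induction c generalizing t i with
  | zero => omega
  | succ c ih =>
    rw [Tc]
    rcases Nat.eq_zero_or_pos i with hi | hi
    · subst hi
      have : t + 2 * 0 = t := by ring
      rw [this]; exact Multiset.mem_cons_self _ _
    · apply Multiset.mem_cons_of_mem; apply Multiset.mem_cons_of_mem
      have : t + 2 * i = (t + 2) + 2 * (i - 1) := by omega
      rw [this]; exact ih (by omega)

lemma mem_Tc_self {c t : ℕ} (h : 1 ≤ c) : t ∈ Tc c t := by
  have := mem_Tc (c := c) (t := t) (i := 0) (by omega)
  simpa using this

lemma Tc_erase {c t : ℕ} (h : 1 ≤ c) :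
    (Tc c t).erase t = t ::ₘ Tc (c - 1) (t + 2) := by
  obtain ⟨c', rfl⟩ : ∃ c', c = c' + 1 := ⟨c - 1, by omega⟩
  rw [Tc, Multiset.erase_cons_head]
  congr 1

lemma mem_MO_self {k : ℕ} : ∀ {j c : ℕ}, 1 ≤ c → 2 * k + 1 ≤ j → j ∈ MO j k c := by
  induction k using Nat.twoStepInduction with
  | zero => intro j c hc _; exact mem_Tc_self hc
  | one =>
    intro j c hc hj
    rw [MO, Tc_erase hc]
    exact Multiset.mem_cons_of_mem (Multiset.mem_cons_self _ _)
  | more k ih _ =>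
    intro j c hc hj
    rw [MO]
    rw [Multiset.mem_erase_of_ne (by omega)]
    exact Multiset.mem_cons_of_mem (ih hc (by omega))

lemma mem_MO_low {k : ℕ} : ∀ {j c : ℕ}, 1 ≤ k → 2 * k + 1 ≤ j → j - 2 * k ∈ MO j k c := by
  induction k using Nat.twoStepInduction with
  | zero => intro j c h _; omega
  | one =>
    intro j c _ hj
    rw [MO]
    have : j - 2 * 1 = j - 2 := by omega
    rw [this]; exact Multiset.mem_cons_self _ _
  | more k _ _ =>
    intro j c _ hj
    rw [MO]
    rw [Multiset.mem_erase_of_ne (by omega)]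
    have : j - 2 * (k + 2) = j - (2 * k + 4) := by omega
    rw [this]; exact Multiset.mem_cons_self _ _

lemma mem_ME_low {k : ℕ} : ∀ {j c : ℕ}, 2 * k + 2 ≤ j → j - (2 * k + 1) ∈ ME j k c := by
  induction k using Nat.twoStepInduction with
  | zero =>
    intro j c hj
    rw [ME]
    have : j - (2 * 0 + 1) = j - 1 := by omega
    rw [this]; exact Multiset.mem_cons_self _ _
  | one =>
    intro j c hj
    rw [ME]
    have : j - (2 * 1 + 1) = j - 3 := by omega
    rw [this]; exact Multiset.mem_cons_self _ _
  | more k _ _ =>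
    intro j c hj
    rw [ME]
    rw [Multiset.mem_erase_of_ne (by omega)]
    have : j - (2 * (k + 2) + 1) = j - (2 * k + 5) := by omega
    rw [this]; exact Multiset.mem_cons_self _ _

lemma mem_ME_high {k : ℕ} : ∀ {j c i : ℕ}, k ≤ i → i < c → j + (2 * i + 1) ∈ ME j k c := by
  induction k using Nat.twoStepInduction with
  | zero =>
    intro j c i _ hic
    rw [ME]
    apply Multiset.mem_cons_of_mem
    have : j + (2 * i + 1) = (j + 1) + 2 * i := by omega
    rw [this]; exact mem_Tc hic
  | one =>
    intro j c i _ hic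
    rw [ME]
    apply Multiset.mem_cons_of_mem
    have : j + (2 * i + 1) = (j + 1) + 2 * i := by omega
    rw [this]; exact mem_Tc hic
  | more k ih _ =>
    intro j c i hki hic
    rw [ME]
    rw [Multiset.mem_erase_of_ne (by omega)]
    exact Multiset.mem_cons_of_mem (ih (by omega) hic)

lemma MO_erase {k : ℕ} : ∀ {j c : ℕ}, 1 ≤ c → 2 * k + 1 ≤ j →
    (MO j k c).erase j = ME (j + 1) k (c - 1) := by
  induction k using Nat.twoStepInduction with
  | zero =>
    intro j c hc hj
    rw [MO, Tc_erase hc, ME]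
    congr 1
  | one =>
    intro j c hc hj
    have hne : (j : ℕ) - 2 ≠ j := by omega
    rw [MO, Multiset.erase_cons_tail _ hne, Tc_erase hc, Multiset.erase_cons_head, ME]
    congr 1
  | more k ih _ =>
    intro j c hc hj
    have hne1 : j - (2 * k + 4) ≠ j + (2 * k + 2) := by omega
    have hne2 : j - (2 * k + 4) ≠ j := by omega
    rw [MO, Multiset.erase_cons_tail _ hne1, Multiset.erase_cons_tail _ hne2,
      Multiset.erase_comm, ih hc (by omega)]
    have hrhs : ME (j + 1) (k + 2) (c - 1)
        = (((j + 1) - (2 * k + 5)) ::ₘ ME (j + 1) k (c - 1)).erase ((j + 1) + (2 * k + 1)) := rfl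
    have he1 : (j + 1) - (2 * k + 5) = j - (2 * k + 4) := by omega
    have he2 : (j + 1) + (2 * k + 1) = j + (2 * k + 2) := by omega
    have hne3 : j - (2 * k + 4) ≠ j + (2 * k + 2) := by omega
    rw [hrhs, he1, he2, Multiset.erase_cons_tail _ hne3]

lemma ME_erase_high {k : ℕ} : ∀ {j c : ℕ}, 2 * k + 2 ≤ j →
    (ME j k c).erase (j + (2 * k + 1)) = MO (j + 1) (k + 1) c := by
  induction k using Nat.twoStepInduction with
  | zero =>
    intro j c hj
    have hne : j - 1 ≠ j + (2 * 0 + 1) := by omega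
    rw [ME, Multiset.erase_cons_tail _ hne, MO]
    have he1 : (j + 1) - 2 = j - 1 := by omega
    have he2 : j + (2 * 0 + 1) = j + 1 := by omega
    rw [he1, he2]
  | one =>
    intro j c hj
    have hrhs : MO (j + 1) 2 c
        = (((j + 1) - (2 * 0 + 4)) ::ₘ MO (j + 1) 0 c).erase ((j + 1) + (2 * 0 + 2)) := rfl
    have he1 : (j + 1) - (2 * 0 + 4) = j - 3 := by omega
    have he2 : (j + 1) + (2 * 0 + 2) = j + (2 * 1 + 1) := by omega
    have hne : j - 3 ≠ j + (2 * 1 + 1) := by omega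
    rw [ME, hrhs, he1, he2, MO, Multiset.erase_cons_tail _ hne]
  | more k ih _ =>
    intro j c hj
    have hne1 : j - (2 * k + 5) ≠ j + (2 * k + 1) := by omega
    have hne2 : j - (2 * k + 5) ≠ j + (2 * (k + 2) + 1) := by omega
    rw [ME, Multiset.erase_cons_tail _ hne1, Multiset.erase_cons_tail _ hne2,
      ih (by omega)]
    have hrhs : MO (j + 1) (k + 3) c
        = (((j + 1) - (2 * (k + 1) + 4)) ::ₘ MO (j + 1) (k + 1) c).erase
            ((j + 1) + (2 * (k + 1) + 2)) := rfl
    have he1 : (j + 1) - (2 * (k + 1) + 4) = j - (2 * k + 5) := by omega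
    have he2 : (j + 1) + (2 * (k + 1) + 2) = j + (2 * (k + 2) + 1) := by omega
    have hne3 : j - (2 * k + 5) ≠ j + (2 * (k + 2) + 1) := by omega
    rw [hrhs, he1, he2, Multiset.erase_cons_tail _ hne3]

lemma ME_erase_low {k : ℕ} : ∀ {j c : ℕ}, 2 * k + 2 ≤ j →
    (ME j k c).erase (j - (2 * k + 1)) = MO (j + 1) (k - 1) c := by
  induction k using Nat.twoStepInduction with
  | zero =>
    intro j c hj
    rw [ME, show j - (2 * 0 + 1) = j - 1 from by omega, Multiset.erase_cons_head, MO]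
  | one =>
    intro j c hj
    rw [ME, show j - (2 * 1 + 1) = j - 3 from by omega, Multiset.erase_cons_head]
    rfl
  | more k _ _ =>
    intro j c hj
    have hne1 : j - (2 * k + 5) ≠ j + (2 * k + 1) := by omega
    rw [ME, show j - (2 * (k + 2) + 1) = j - (2 * k + 5) from by omega,
      Multiset.erase_cons_tail _ hne1, Multiset.erase_cons_head,
      ME_erase_high (by omega)]
    congr 1

/-! ### the two transitions -/

lemma TTO {n u k : ℕ} (hjn : 2 * u + 1 ≤ n) (hk : k ≤ u) :
    S n (2 * u + 1) (MO (2 * u + 1) k (n - u))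
      = (1 + (PowerSeries.X : PS) ^ (2 * u + 1)) * S n (2 * u + 2) (ME (2 * u + 2) k (n - u - 1)) := by
  rw [S_TO _ hjn (by omega) (mem_MO_self (by omega) (by omega))]
  rw [MO_erase (by omega) (by omega)]

lemma TTE {n u k : ℕ} (hjn : 2 * u + 2 ≤ n) (hk : k ≤ u) :
    S n (2 * u + 2) (ME (2 * u + 2) k (n - u - 1))
      = S n (2 * u + 3) (MO (2 * u + 3) (k + 1) (n - u - 1))
        + (PowerSeries.X : PS) ^ ((2 * u + 2) + (2 * k + 1))
          * S n (2 * u + 3) (MO (2 * u + 3) (k - 1) (n - u - 1)) := by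
  have hmema : (2 * u + 2) + (2 * k + 1) ∈ ME (2 * u + 2) k (n - u - 1) :=
    mem_ME_high (le_refl k) (by omega)
  have hmemb : (2 * u + 2) - (2 * k + 1) ∈ ME (2 * u + 2) k (n - u - 1) :=
    mem_ME_low (by omega)
  rw [S_TE _ hjn (by omega) (by omega) (by omega) hmema hmemb]
  rw [ME_erase_high (by omega), ME_erase_low (by omega)]

/-! ### main nonnegativity induction -/

lemma main (n : ℕ) : ∀ m u k, n ≤ u + m → k ≤ u →
    (2 * u + 1 ≤ n + 1 → NN (S n (2 * u + 1) (MO (2 * u + 1) k (n - u)))) ∧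
    (2 * u + 2 ≤ n + 1 → NN (S n (2 * u + 2) (ME (2 * u + 2) k (n - u - 1)))) := by
  intro m
  induction m with
  | zero =>
    intro u k hm hk
    constructor
    · intro h1
      have hu : 2 * u + 1 = n + 1 := by omega
      rw [hu]
      exact NN_S_top n _
    · intro h2
      omega
  | succ m ih =>
    intro u k hm hk
    have hCE : 2 * u + 2 ≤ n + 1 → NN (S n (2 * u + 2) (ME (2 * u + 2) k (n - u - 1))) := by
      intro h2
      rcases eq_or_lt_of_le h2 with heq | hlt
      · rw [heq]; exact NN_S_top n _
      · have hjn : 2 * u + 2 ≤ n := by omega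
        rw [TTE hjn hk]
        refine NN_add ((ih (u + 1) (k + 1) (by omega) (by omega)).1 (by omega)) ?_
        exact NN_mul (NN_Xpow _) ((ih (u + 1) (k - 1) (by omega) (by omega)).1 (by omega))
    refine ⟨?_, hCE⟩
    intro h1
    rcases eq_or_lt_of_le h1 with heq | hlt
    · rw [heq]; exact NN_S_top n _
    · have hjn : 2 * u + 1 ≤ n := by omega
      rw [TTO hjn hk]
      exact NN_mul (NN_onePlusXpow _) (hCE (by omega))

/-! ### strict positivity along the maximal-k chain -/

lemma mainP (n : ℕ) (hn : 1 ≤ n) : ∀ m u, n ≤ u + m →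
    (2 * u + 1 ≤ n + 1 → PP (S n (2 * u + 1) (MO (2 * u + 1) u (n - u)))) ∧
    (2 * u + 2 ≤ n + 1 → PP (S n (2 * u + 2) (ME (2 * u + 2) u (n - u - 1)))) := by
  intro m
  induction m with
  | zero =>
    intro u hm
    constructor
    · intro h1
      have hu : 2 * u + 1 = n + 1 := by omega
      have hu1 : 1 ≤ u := by omega
      have hmem : (1 : ℕ) ∈ MO (2 * u + 1) u (n - u) := by
        have := mem_MO_low (k := u) (j := 2 * u + 1) (c := n - u) hu1 (by omega)
        have he : 2 * u + 1 - 2 * u = 1 := by omega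
        rwa [he] at this
      rw [hu]
      rw [hu] at hmem
      exact PP_S_top n hmem
    · intro h2
      omega
  | succ m ih =>
    intro u hm
    have hCE : 2 * u + 2 ≤ n + 1 → PP (S n (2 * u + 2) (ME (2 * u + 2) u (n - u - 1))) := by
      intro h2
      rcases eq_or_lt_of_le h2 with heq | hlt
      · have hmem : (1 : ℕ) ∈ ME (2 * u + 2) u (n - u - 1) := by
          have := mem_ME_low (k := u) (j := 2 * u + 2) (c := n - u - 1) (by omega)
          have he : 2 * u + 2 - (2 * u + 1) = 1 := by omega
          rwa [he] at this
        rw [heq]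
        rw [heq] at hmem
        exact PP_S_top n hmem
      · have hjn : 2 * u + 2 ≤ n := by omega
        rw [TTE hjn (le_refl u)]
        refine PP_add_NN ((ih (u + 1) (by omega)).1 (by omega)) ?_
        refine NN_mul (NN_Xpow _) ?_
        exact ((main n) (m + 1) (u + 1) (u - 1) (by omega) (by omega)).1 (by omega)
    refine ⟨?_, hCE⟩
    intro h1
    rcases eq_or_lt_of_le h1 with heq | hlt
    · have hmem : (1 : ℕ) ∈ MO (2 * u + 1) u (n - u) := by
        rcases Nat.eq_zero_or_pos u with hu0 | hu1
        · subst hu0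
          have hn0 : n = 0 := by omega
          omega
        · have := mem_MO_low (k := u) (j := 2 * u + 1) (c := n - u) hu1 (by omega)
          have he : 2 * u + 1 - 2 * u = 1 := by omega
          rwa [he] at this
      rw [heq]
      rw [heq] at hmem
      exact PP_S_top n hmem
    · have hjn : 2 * u + 1 ≤ n := by omega
      rw [TTO hjn (le_refl u)]
      exact PP_onePlusXpow_mul _ (hCE (by omega))

/-! ### identification with the original quotient -/

lemma Q_cancel : ∀ (c t : ℕ), t ≠ 0 →
    (∏ j ∈ Finset.range c, (1 - (PowerSeries.X : PS) ^ (t + 2 * j))) ^ 2 * prodG (Tc c t) = 1 := by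
  intro c
  induction c with
  | zero => intro t _; simp [Tc, prodG]
  | succ c ih =>
    intro t ht
    have hprod : (∏ j ∈ Finset.range (c + 1), (1 - (PowerSeries.X : PS) ^ (t + 2 * j)))
        = (1 - (PowerSeries.X : PS) ^ t)
          * ∏ j ∈ Finset.range c, (1 - (PowerSeries.X : PS) ^ ((t + 2) + 2 * j)) := by
      rw [Finset.prod_range_succ', mul_comm]
      congr 1
      apply Finset.prod_congr rfl
      intro i _
      have : t + 2 * (i + 1) = (t + 2) + 2 * i := by ring
      rw [this]

    rw [hprod, Tc, prodG_cons, prodG_cons]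
    have hrw : ((1 - (PowerSeries.X : PS) ^ t)
          * ∏ j ∈ Finset.range c, (1 - (PowerSeries.X : PS) ^ ((t + 2) + 2 * j))) ^ 2
        * (g t * (g t * prodG (Tc c (t + 2))))
        = ((1 - (PowerSeries.X : PS) ^ t) * g t) * ((1 - (PowerSeries.X : PS) ^ t) * g t)
          * ((∏ j ∈ Finset.range c, (1 - (PowerSeries.X : PS) ^ ((t + 2) + 2 * j))) ^ 2
            * prodG (Tc c (t + 2))) := by
      ring
    rw [hrw, g_cancel ht, ih (t + 2) (by omega)]
    ring

lemma F_eq (n : ℕ) :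
    P2 2 n * (P2 1 n ^ 2)⁻¹ = S n 1 (MO 1 0 (n - 0)) := by
  have h1 : P2 2 n = Nn n 1 := by
    rw [P2, Nn]
    have : n + 1 - 1 = n := by omega
    rw [this]
    apply Finset.prod_congr rfl
    intro i _
    have : 2 + 2 * i = 2 * (1 + i) := by ring
    rw [this]
  have h2 : (P2 1 n ^ 2) * prodG (Tc n 1) = 1 := by
    have := Q_cancel n 1 (by omega)
    rw [P2]
    convert this using 3
  have hconst : PowerSeries.constantCoeff (R := ℚ) (P2 1 n ^ 2) ≠ 0 := by
    have : PowerSeries.constantCoeff (R := ℚ) (P2 1 n ^ 2) = 1 := by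
      have h3 : PowerSeries.constantCoeff (R := ℚ) (P2 1 n ^ 2) * PowerSeries.constantCoeff (R := ℚ) (prodG (Tc n 1)) = 1 := by
        rw [← map_mul, h2, map_one]
      rw [constantCoeff_prodG, mul_one] at h3
      exact h3
    rw [this]; norm_num
  have hinv : (P2 1 n ^ 2)⁻¹ = prodG (Tc n 1) := by
    rw [PowerSeries.inv_eq_iff_mul_eq_one hconst]
    rw [mul_comm]; exact h2
  rw [hinv]
  rw [show MO 1 0 (n - 0) = Tc n 1 from by rw [Nat.sub_zero]; rfl]
  rw [S, h1]

end

end Stmt3Aux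

/-- For every positive integer `n`, the formal power series `(q²;q²)_n / (q;q²)_n²`
has all coefficients strictly positive. -/
theorem stmt_3 (n : ℕ) (hn : 0 < n) :
    ∀ m : ℕ, 0 < PowerSeries.coeff (R := ℚ) m (P2 2 n * (P2 1 n ^ 2)⁻¹) := by
  intro m
  rw [Stmt3Aux.F_eq n]
  have := (Stmt3Aux.mainP n hn n 0 (by omega)).1 (by omega)
  exact this m
end

section
/- For every positive integer n, the identity (q²;q²)_n / (q;q²)_n² = ∑_{i=0}^{n} [n choose i]_{q²} · q^i / ((q^{2i+1};q²)_{n-i} (q^{2(n-i)+1};q²)_i) holds as formal power series in q. -/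
open Finset PowerSeries

lemma P2_const (a n : ℕ) (ha : 0 < a) : PowerSeries.constantCoeff (R := ℚ) (P2 a n) = 1 := by
  simp only [P2, map_prod, map_sub, map_one, map_pow, PowerSeries.constantCoeff_X]
  rw [Finset.prod_congr rfl (fun j _ => ?_), Finset.prod_const_one]
  rw [zero_pow (by omega : a + 2 * j ≠ 0)]; ring

lemma P2_ne (a n : ℕ) (ha : 0 < a) : P2 a n ≠ 0 := fun h => by
  simpa [h] using P2_const a n ha

lemma P2_split (a i n : ℕ) (h : i ≤ n) :
    P2 a n = P2 a i * P2 (a + 2 * i) (n - i) := by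
  obtain ⟨m, rfl⟩ : ∃ m, n = i + m := ⟨n - i, by omega⟩
  rw [P2, Finset.prod_range_add]
  congr 1
  · simp only [P2, add_tsub_cancel_left]
    apply Finset.prod_congr rfl
    intro j _
    have : a + 2 * (i + j) = a + 2 * i + 2 * j := by ring
    rw [this]

noncomputable def G : ℕ → ℕ → PowerSeries ℚ
  | _, 0 => 1
  | 0, _ + 1 => 0
  | n + 1, i + 1 =>
      G n (i + 1) + (PowerSeries.X : PowerSeries ℚ) ^ (2 * (n - i)) * G n i

lemma G_zero (n : ℕ) : G n 0 = 1 := by cases n <;> rfl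

lemma G_of_lt : ∀ n i : ℕ, n < i → G n i = 0
  | 0, _ + 1, _ => rfl
  | n + 1, i + 1, h => by
      rw [G, G_of_lt n (i + 1) (by omega), G_of_lt n i (by omega), mul_zero, add_zero]

lemma P2_succ (a n : ℕ) :
    P2 a (n + 1) = P2 a n * (1 - (PowerSeries.X : PowerSeries ℚ) ^ (a + 2 * n)) := by
  simp [P2, Finset.prod_range_succ]

lemma G_mul : ∀ n i : ℕ, i ≤ n → G n i * (P2 2 i * P2 2 (n - i)) = P2 2 n
  | n, 0, _ => by simp [G_zero, P2, Nat.sub_zero]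
  | 0, i + 1, h => by omega
  | n + 1, j + 1, h => by
      rw [G]
      rcases Nat.lt_or_ge (j + 1) (n + 1) with hlt | hge
      · have h1 : j + 1 ≤ n := by omega
        have h2 : j ≤ n := by omega
        have e1 : n + 1 - (j + 1) = (n - (j + 1)) + 1 := by omega
        have key1 := G_mul n (j + 1) h1
        have key2 := G_mul n j h2
        have e2 : n - j = (n - (j + 1)) + 1 := by omega
        have e3 : 2 + 2 * (n - (j + 1)) = 2 * (n - j) := by omega
        have e4 : (PowerSeries.X : PowerSeries ℚ) ^ (2 * (n - j)) * X ^ (2 + 2 * j)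
            = X ^ (2 + 2 * n) := by
          rw [← pow_add]; congr 1; omega
        have expand : (G n (j + 1) + (PowerSeries.X : PowerSeries ℚ) ^ (2 * (n - j)) * G n j) *
            (P2 2 (j + 1) * P2 2 (n + 1 - (j + 1)))
            = G n (j + 1) * (P2 2 (j + 1) * P2 2 (n - (j + 1))) * (1 - X ^ (2 * (n - j)))
              + X ^ (2 * (n - j)) * (G n j * (P2 2 j * P2 2 (n - j))) * (1 - X ^ (2 + 2 * j)) := by
          rw [e1, e2, P2_succ 2 (n - (j + 1)), P2_succ 2 j]
          ring
        rw [expand, key1, key2, P2_succ 2 n]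
        have : P2 2 n * (1 - X ^ (2 * (n - j))) +
            X ^ (2 * (n - j)) * P2 2 n * (1 - X ^ (2 + 2 * j))
            = P2 2 n * (1 - X ^ (2 * (n - j)) * X ^ (2 + 2 * j)) := by ring
        rw [this, e4]
      · have hj : j = n := by omega
        subst hj
        rw [G_of_lt j (j + 1) (by omega), Nat.sub_self, Nat.sub_self, mul_zero, pow_zero,
          one_mul, zero_add]
        have key := G_mul j j le_rfl
        rw [Nat.sub_self] at key
        have hGnn : G j j = 1 := by
          have h2 : G j j * P2 2 j = P2 2 j := by simpa [P2] using key
          exact mul_right_cancel₀ (P2_ne 2 j (by norm_num)) (by simpa using h2)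
        simp [hGnn, P2]

lemma G_succ (n i : ℕ) :
    G (n + 1) (i + 1) = G n (i + 1) + (PowerSeries.X : PowerSeries ℚ) ^ (2 * (n - i)) * G n i :=
  rfl

lemma P2_zero (a : ℕ) : P2 a 0 = 1 := by simp [P2]

lemma KEY (n : ℕ) :
    ∑ i ∈ Finset.range (n + 1),
      G n i * (PowerSeries.X : PowerSeries ℚ) ^ i * P2 1 i * P2 1 (n - i) = P2 2 n := by
  induction n with
  | zero => simp [G_zero, P2_zero, P2]
  | succ n ih =>
    have hterm : ∀ i ∈ Finset.range (n + 1),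
        (G n i * (PowerSeries.X : PowerSeries ℚ) ^ i * P2 1 i * P2 1 (n + 1 - i)
          + X ^ (2 * (n - i)) * G n i * X ^ (i + 1) * P2 1 (i + 1) * P2 1 (n - i))
        = (G n i * X ^ i * P2 1 i * P2 1 (n - i)) * (1 - X ^ (2 + 2 * n)) := by
      intro i hi
      have hi' : i ≤ n := by simpa [Nat.lt_succ_iff] using hi
      have e1 : n + 1 - i = (n - i) + 1 := by omega
      rw [e1, P2_succ 1 (n - i), P2_succ 1 i]
      have eAB : (PowerSeries.X : PowerSeries ℚ) ^ (1 + 2 * (n - i)) * X ^ (1 + 2 * i)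
          = X ^ (2 + 2 * n) := by
        rw [← pow_add]; congr 1; omega
      have e5 : (PowerSeries.X : PowerSeries ℚ) ^ (2 * (n - i)) * X ^ (2 * i) = X ^ (2 * n) := by
        rw [← pow_add]; congr 1; omega
      linear_combination (G n i * X ^ i * P2 1 i * P2 1 (n - i)) * eAB
        - 2 * (G n i * X ^ (2 + i) * P2 1 i * P2 1 (n - i)) * e5
    calc ∑ i ∈ Finset.range (n + 1 + 1),
          G (n + 1) i * (PowerSeries.X : PowerSeries ℚ) ^ i * P2 1 i * P2 1 (n + 1 - i)
        = (∑ i ∈ Finset.range (n + 1),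
            G (n + 1) (i + 1) * X ^ (i + 1) * P2 1 (i + 1) * P2 1 (n + 1 - (i + 1)))
          + G (n + 1) 0 * X ^ 0 * P2 1 0 * P2 1 (n + 1 - 0) :=
        Finset.sum_range_succ' _ (n + 1)
      _ = (∑ i ∈ Finset.range (n + 1),
            (G n (i + 1) * X ^ (i + 1) * P2 1 (i + 1) * P2 1 (n + 1 - (i + 1))
              + X ^ (2 * (n - i)) * G n i * X ^ (i + 1) * P2 1 (i + 1) * P2 1 (n - i)))
          + P2 1 (n + 1) := by
        congr 1
        · refine Finset.sum_congr rfl fun i hi => ?_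
          rw [G_succ, Nat.succ_sub_succ]
          ring
        · simp [G_zero, P2_zero]
      _ = ((∑ i ∈ Finset.range (n + 1),
            G n (i + 1) * X ^ (i + 1) * P2 1 (i + 1) * P2 1 (n + 1 - (i + 1))) + P2 1 (n + 1))
          + ∑ i ∈ Finset.range (n + 1),
            X ^ (2 * (n - i)) * G n i * X ^ (i + 1) * P2 1 (i + 1) * P2 1 (n - i) := by
        rw [Finset.sum_add_distrib]; ring
      _ = (∑ i ∈ Finset.range (n + 1),
            G n i * X ^ i * P2 1 i * P2 1 (n + 1 - i))
          + ∑ i ∈ Finset.range (n + 1),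
            X ^ (2 * (n - i)) * G n i * X ^ (i + 1) * P2 1 (i + 1) * P2 1 (n - i) := by
        congr 1
        have h1 := Finset.sum_range_succ'
          (fun i => G n i * (PowerSeries.X : PowerSeries ℚ) ^ i * P2 1 i * P2 1 (n + 1 - i)) (n + 1)
        have h2 := Finset.sum_range_succ
          (fun i => G n i * (PowerSeries.X : PowerSeries ℚ) ^ i * P2 1 i * P2 1 (n + 1 - i)) (n + 1)
        have hf0 : G n 0 * (PowerSeries.X : PowerSeries ℚ) ^ 0 * P2 1 0 * P2 1 (n + 1 - 0)
            = P2 1 (n + 1) := by simp [G_zero, P2_zero]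
        have hftop : G n (n + 1) * (PowerSeries.X : PowerSeries ℚ) ^ (n + 1) * P2 1 (n + 1)
            * P2 1 (n + 1 - (n + 1)) = 0 := by
          rw [G_of_lt n (n + 1) (by omega)]; ring
        have hh := h1.symm.trans h2
        simp only [hf0, hftop, add_zero] at hh
        exact hh
      _ = ∑ i ∈ Finset.range (n + 1),
            (G n i * X ^ i * P2 1 i * P2 1 (n + 1 - i)
              + X ^ (2 * (n - i)) * G n i * X ^ (i + 1) * P2 1 (i + 1) * P2 1 (n - i)) := by
        rw [Finset.sum_add_distrib]
      _ = ∑ i ∈ Finset.range (n + 1),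
            (G n i * X ^ i * P2 1 i * P2 1 (n - i)) * (1 - X ^ (2 + 2 * n)) :=
        Finset.sum_congr rfl hterm
      _ = (∑ i ∈ Finset.range (n + 1),
            G n i * X ^ i * P2 1 i * P2 1 (n - i)) * (1 - X ^ (2 + 2 * n)) :=
        (Finset.sum_mul _ _ _).symm
      _ = P2 2 (n + 1) := by rw [ih, ← P2_succ]

/-- For every positive integer `n`,
`(q²;q²)_n / (q;q²)_n²
  = ∑_{i=0}^{n} [n choose i]_{q²} q^i / ((q^{2i+1};q²)_{n-i} (q^{2(n-i)+1};q²)_i)`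
as formal power series in `q`, where `[n choose i]_{q²} = (q²;q²)_n/((q²;q²)_i (q²;q²)_{n-i})`. -/
theorem stmt_4 (n : ℕ) (hn : 0 < n) :
    P2 2 n * (P2 1 n ^ 2)⁻¹
      = ∑ i ∈ Finset.range (n + 1),
          P2 2 n * (P2 2 i * P2 2 (n - i))⁻¹ * (PowerSeries.X : PowerSeries ℚ) ^ i *
            (P2 (2 * i + 1) (n - i) * P2 (2 * (n - i) + 1) i)⁻¹ := by
  have hmain : ∀ i ∈ Finset.range (n + 1),
      P2 2 n * (P2 2 i * P2 2 (n - i))⁻¹ * (PowerSeries.X : PowerSeries ℚ) ^ i *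
        (P2 (2 * i + 1) (n - i) * P2 (2 * (n - i) + 1) i)⁻¹
      = G n i * X ^ i * P2 1 i * P2 1 (n - i) * (P2 1 n ^ 2)⁻¹ := by
    intro i hi
    have hi' : i ≤ n := by simpa [Nat.lt_succ_iff] using hi
    have c1 : PowerSeries.constantCoeff (R := ℚ) (P2 2 i * P2 2 (n - i)) ≠ 0 := by
      rw [map_mul, P2_const 2 i (by omega), P2_const 2 (n - i) (by omega)]; norm_num
    have hD1 : (P2 2 i * P2 2 (n - i)) * (P2 2 i * P2 2 (n - i))⁻¹ = 1 :=
      PowerSeries.mul_inv_cancel _ c1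
    have step1 : P2 2 n * (P2 2 i * P2 2 (n - i))⁻¹ = G n i := by
      rw [← G_mul n i hi', mul_assoc, hD1, mul_one]
    have a1 : P2 1 n = P2 1 i * P2 (2 * i + 1) (n - i) := by
      have := P2_split 1 i n hi'
      have e : 1 + 2 * i = 2 * i + 1 := by ring
      rwa [e] at this
    have a2 : P2 1 n = P2 1 (n - i) * P2 (2 * (n - i) + 1) i := by
      have h := P2_split 1 (n - i) n (by omega)
      have e : 1 + 2 * (n - i) = 2 * (n - i) + 1 := by ring
      have e2 : n - (n - i) = i := by omega
      rwa [e, e2] at h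
    have hsplit2 : P2 1 i * P2 1 (n - i) * (P2 (2 * i + 1) (n - i) * P2 (2 * (n - i) + 1) i)
        = P2 1 n ^ 2 := by
      calc P2 1 i * P2 1 (n - i) * (P2 (2 * i + 1) (n - i) * P2 (2 * (n - i) + 1) i)
          = (P2 1 i * P2 (2 * i + 1) (n - i)) * (P2 1 (n - i) * P2 (2 * (n - i) + 1) i) := by
            ring
        _ = P2 1 n * P2 1 n := by rw [← a1, ← a2]
        _ = P2 1 n ^ 2 := (sq (P2 1 n)).symm
    have hD2ne : P2 (2 * i + 1) (n - i) * P2 (2 * (n - i) + 1) i ≠ 0 :=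
      mul_ne_zero (P2_ne _ _ (by omega)) (P2_ne _ _ (by omega))
    have c2 : PowerSeries.constantCoeff (R := ℚ)
        (P2 (2 * i + 1) (n - i) * P2 (2 * (n - i) + 1) i) ≠ 0 := by
      rw [map_mul, P2_const _ _ (by omega), P2_const _ _ (by omega)]; norm_num
    have hD2 : (P2 (2 * i + 1) (n - i) * P2 (2 * (n - i) + 1) i) *
        (P2 (2 * i + 1) (n - i) * P2 (2 * (n - i) + 1) i)⁻¹ = 1 :=
      PowerSeries.mul_inv_cancel _ c2
    have c3 : PowerSeries.constantCoeff (R := ℚ) (P2 1 n ^ 2) ≠ 0 := by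
      rw [map_pow, P2_const 1 n (by omega)]; norm_num
    have hP : (P2 1 n ^ 2) * (P2 1 n ^ 2)⁻¹ = 1 := PowerSeries.mul_inv_cancel _ c3
    have step2 : (PowerSeries.X : PowerSeries ℚ) ^ i *
        (P2 (2 * i + 1) (n - i) * P2 (2 * (n - i) + 1) i)⁻¹
        = X ^ i * P2 1 i * P2 1 (n - i) * (P2 1 n ^ 2)⁻¹ := by
      apply mul_right_cancel₀ hD2ne
      linear_combination (PowerSeries.X : PowerSeries ℚ) ^ i * hD2
        - X ^ i * (P2 1 n ^ 2)⁻¹ * hsplit2 - X ^ i * hP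
    calc P2 2 n * (P2 2 i * P2 2 (n - i))⁻¹ * (PowerSeries.X : PowerSeries ℚ) ^ i *
          (P2 (2 * i + 1) (n - i) * P2 (2 * (n - i) + 1) i)⁻¹
        = G n i * (X ^ i * (P2 (2 * i + 1) (n - i) * P2 (2 * (n - i) + 1) i)⁻¹) := by
          rw [step1]; ring
      _ = G n i * (X ^ i * P2 1 i * P2 1 (n - i) * (P2 1 n ^ 2)⁻¹) := by rw [step2]
      _ = G n i * X ^ i * P2 1 i * P2 1 (n - i) * (P2 1 n ^ 2)⁻¹ := by ring
  rw [Finset.sum_congr rfl hmain, ← Finset.sum_mul, KEY n]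
end

section
/- For every nonnegative integer n, the formal power series (q²;q²)_n / (q;q²)_{n+1}² has all coefficients strictly positive. -/
open Finset PowerSeries

/-- geometric-type series `1/(1 - q^k)`. -/
noncomputable def Gg (k : ℕ) : PowerSeries ℚ :=
  PowerSeries.mk fun m => if k ∣ m then 1 else 0

lemma one_sub_X_pow_mul_Gg (s : ℕ) :
    (1 - (PowerSeries.X : PowerSeries ℚ) ^ (s + 1)) * Gg (s + 1) = 1 := by
  set k := s + 1 with hk
  ext m
  rw [sub_mul, one_mul, map_sub, PowerSeries.coeff_X_pow_mul']
  rcases Nat.eq_zero_or_pos m with rfl | hm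
  · simp [Gg, hk]
  · rw [PowerSeries.coeff_one, if_neg hm.ne']
    by_cases h : k ≤ m
    · rw [if_pos h]
      simp only [Gg, PowerSeries.coeff_mk]
      have hdvd : k ∣ m ↔ k ∣ m - k := by
        constructor
        · intro hd; exact (Nat.dvd_sub hd dvd_rfl)
        · intro hd
          have := Nat.dvd_add hd (dvd_refl k)
          rwa [Nat.sub_add_cancel h] at this
      by_cases hd : k ∣ m
      · rw [if_pos hd, if_pos (hdvd.mp hd), sub_self]
      · rw [if_neg hd, if_neg (fun hc => hd (hdvd.mpr hc)), sub_self]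
    · rw [if_neg h]
      simp only [Gg, PowerSeries.coeff_mk, sub_zero]
      rw [if_neg]
      intro hd
      rcases hd with ⟨c, rfl⟩
      rcases Nat.eq_zero_or_pos c with rfl | hc
      · simp at hm
      · exact h (Nat.le_mul_of_pos_right k hc)

/-- numerator part -/
noncomputable def Nc (s u c : ℕ) : PowerSeries ℚ :=
  ∏ k ∈ Finset.range c, (1 - (PowerSeries.X : PowerSeries ℚ) ^ (2*s + 2*u + 2*k + 2))

/-- x-denominator part -/
noncomputable def Px (s a : ℕ) : PowerSeries ℚ :=
  ∏ i ∈ Finset.range a, Gg (2*s + 2*i + 1)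

/-- y-denominator part -/
noncomputable def Py (u b : ℕ) : PowerSeries ℚ :=
  ∏ j ∈ Finset.range b, Gg (2*u + 2*j + 1)

noncomputable def Vv (s u a b c : ℕ) : PowerSeries ℚ :=
  Nc s u c * (Px s a * Py u b)

lemma Nc_succ (s u c : ℕ) :
    Nc s u (c+1) = (1 - (PowerSeries.X : PowerSeries ℚ) ^ (2*s + 2*u + 2)) * Nc s (u+1) c := by
  unfold Nc
  rw [Finset.prod_range_succ', mul_comm]
  congr 1
  apply Finset.prod_congr rfl; intro k _; congr 2; omega

lemma Nc_shift (s u c : ℕ) : Nc s (u+1) c = Nc (s+1) u c := by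
  unfold Nc
  apply Finset.prod_congr rfl
  intro k _
  congr 2
  ring

lemma Px_succ (s a : ℕ) : Px s (a+1) = Gg (2*s + 1) * Px (s+1) a := by
  unfold Px
  rw [Finset.prod_range_succ', mul_comm]
  congr 1
  exact Finset.prod_congr rfl fun i _ => congrArg Gg (by omega)

lemma Py_succ (u b : ℕ) : Py u (b+1) = Gg (2*u + 1) * Py (u+1) b := by
  unfold Py
  rw [Finset.prod_range_succ', mul_comm]
  congr 1
  exact Finset.prod_congr rfl fun j _ => congrArg Gg (by omega)

lemma gcore (s u : ℕ) :
    (1 - (PowerSeries.X : PowerSeries ℚ) ^ (2*s + 2*u + 2)) * (Gg (2*s+1) * Gg (2*u+1))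
      = Gg (2*s+1) + (PowerSeries.X : PowerSeries ℚ) ^ (2*u+1) * Gg (2*u+1) := by
  have hs : (1 - (PowerSeries.X : PowerSeries ℚ) ^ (2*s+1)) * Gg (2*s+1) = 1 :=
    one_sub_X_pow_mul_Gg (2*s)
  have hu : (1 - (PowerSeries.X : PowerSeries ℚ) ^ (2*u+1)) * Gg (2*u+1) = 1 :=
    one_sub_X_pow_mul_Gg (2*u)
  have hX : (PowerSeries.X : PowerSeries ℚ) ^ (2*s + 2*u + 2)
      = (PowerSeries.X : PowerSeries ℚ) ^ (2*s+1) * (PowerSeries.X : PowerSeries ℚ) ^ (2*u+1) := by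
    rw [← pow_add]; congr 1; ring
  set a := (PowerSeries.X : PowerSeries ℚ) ^ (2*s+1)
  set b := (PowerSeries.X : PowerSeries ℚ) ^ (2*u+1)
  have hne : ((1 - a) * (1 - b)) ≠ 0 := by
    intro h
    have h0 := congrArg (PowerSeries.constantCoeff) h
    have hca : PowerSeries.constantCoeff a = 0 := by
      simp only [a, map_pow, PowerSeries.constantCoeff_X]
      exact zero_pow (by omega)
    have hcb : PowerSeries.constantCoeff b = 0 := by
      simp only [b, map_pow, PowerSeries.constantCoeff_X]
      exact zero_pow (by omega)
    rw [map_mul, map_sub, map_sub, map_one, hca, hcb, map_zero] at h0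
    norm_num at h0
  apply mul_left_cancel₀ hne
  rw [hX]
  have h1 : (1 - a) * (1 - b) * ((1 - a * b) * (Gg (2*s+1) * Gg (2*u+1)))
      = (1 - a * b) * (((1 - a) * Gg (2*s+1)) * ((1 - b) * Gg (2*u+1))) := by ring
  have h2 : (1 - a) * (1 - b) * (Gg (2*s+1) + b * Gg (2*u+1))
      = (1 - b) * ((1 - a) * Gg (2*s+1)) + (1 - a) * b * ((1 - b) * Gg (2*u+1)) := by ring
  rw [h1, hs, hu, h2, hs, hu]
  ring

lemma Vv_rec (s u a b c : ℕ) :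
    Vv s u (a+1) (b+1) (c+1)
      = Vv s (u+1) (a+1) b c + (PowerSeries.X : PowerSeries ℚ) ^ (2*u+1) * Vv (s+1) u a (b+1) c := by
  unfold Vv
  rw [Nc_succ, Px_succ, Py_succ]
  have e1 : Nc (s+1) u c = Nc s (u+1) c := (Nc_shift s u c).symm
  rw [e1]
  have key := gcore s u
  calc (1 - (PowerSeries.X : PowerSeries ℚ) ^ (2*s + 2*u + 2)) * Nc s (u+1) c *
        (Gg (2*s+1) * Px (s+1) a * (Gg (2*u+1) * Py (u+1) b))
      = ((1 - (PowerSeries.X : PowerSeries ℚ) ^ (2*s + 2*u + 2)) * (Gg (2*s+1) * Gg (2*u+1))) *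
        (Nc s (u+1) c * (Px (s+1) a * Py (u+1) b)) := by ring
    _ = (Gg (2*s+1) + (PowerSeries.X : PowerSeries ℚ) ^ (2*u+1) * Gg (2*u+1)) *
        (Nc s (u+1) c * (Px (s+1) a * Py (u+1) b)) := by rw [key]
    _ = Nc s (u+1) c * (Gg (2*s+1) * Px (s+1) a * Py (u+1) b)
        + (PowerSeries.X : PowerSeries ℚ) ^ (2*u+1) *
          (Nc s (u+1) c * (Px (s+1) a * (Gg (2*u+1) * Py (u+1) b))) := by ring

/-- nonnegativity predicate -/
def NN (f : PowerSeries ℚ) : Prop := ∀ m : ℕ, 0 ≤ PowerSeries.coeff m f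

lemma NN_one : NN 1 := by
  intro m
  rw [PowerSeries.coeff_one]
  split <;> norm_num

lemma NN_mul {f g : PowerSeries ℚ} (hf : NN f) (hg : NN g) : NN (f * g) := by
  intro m
  rw [PowerSeries.coeff_mul]
  apply Finset.sum_nonneg
  intro p _
  exact mul_nonneg (hf p.1) (hg p.2)

lemma NN_Gg (k : ℕ) : NN (Gg k) := by
  intro m
  simp only [Gg, PowerSeries.coeff_mk]
  split <;> norm_num

lemma NN_X_pow (k : ℕ) : NN ((PowerSeries.X : PowerSeries ℚ) ^ k) := by
  intro m
  rw [PowerSeries.coeff_X_pow]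
  split <;> norm_num

lemma NN_prod {ι : Type*} (t : Finset ι) (f : ι → PowerSeries ℚ)
    (h : ∀ i ∈ t, NN (f i)) : NN (∏ i ∈ t, f i) :=
  Finset.prod_induction f NN (fun _ _ => NN_mul) NN_one h

lemma NN_Px (s a : ℕ) : NN (Px s a) := NN_prod _ _ (fun i _ => NN_Gg _)
lemma NN_Py (u b : ℕ) : NN (Py u b) := NN_prod _ _ (fun j _ => NN_Gg _)

lemma NN_Vv : ∀ c s u a b : ℕ, c ≤ a → c ≤ b → NN (Vv s u a b c) := by
  intro c
  induction c with
  | zero =>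
      intro s u a b _ _
      have : Vv s u a b 0 = Px s a * Py u b := by
        unfold Vv Nc
        rw [Finset.prod_range_zero, one_mul]
      rw [this]
      exact NN_mul (NN_Px s a) (NN_Py u b)
  | succ c ih =>
      intro s u a b ha hb
      obtain ⟨a', rfl⟩ : ∃ a', a = a' + 1 := ⟨a - 1, by omega⟩
      obtain ⟨b', rfl⟩ : ∃ b', b = b' + 1 := ⟨b - 1, by omega⟩
      rw [Vv_rec]
      intro m
      rw [map_add]
      have h1 : NN (Vv s (u+1) (a'+1) b' c) := ih s (u+1) (a'+1) b' (by omega) (by omega)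
      have h2 : NN ((PowerSeries.X : PowerSeries ℚ) ^ (2*u+1) * Vv (s+1) u a' (b'+1) c) :=
        NN_mul (NN_X_pow _) (ih (s+1) u a' (b'+1) (by omega) (by omega))
      exact add_nonneg (h1 m) (h2 m)

lemma constC_Gg (k : ℕ) : PowerSeries.constantCoeff (Gg k) = 1 := by
  rw [Gg, PowerSeries.constantCoeff_mk]
  simp

lemma constC_Vv (s u a b c : ℕ) : PowerSeries.constantCoeff (Vv s u a b c) = 1 := by
  unfold Vv Nc Px Py
  rw [map_mul, map_mul, map_prod, map_prod, map_prod]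
  have hnum : ∀ k : ℕ, k ∈ Finset.range c →
      PowerSeries.constantCoeff (1 - (PowerSeries.X : PowerSeries ℚ) ^ (2*s + 2*u + 2*k + 2)) = 1 := by
    intro k _
    rw [map_sub, map_one, map_pow, PowerSeries.constantCoeff_X, zero_pow (by omega), sub_zero]
  rw [Finset.prod_congr rfl hnum, Finset.prod_congr rfl (fun i _ => constC_Gg (2*s+2*i+1)),
    Finset.prod_congr rfl (fun j _ => constC_Gg (2*u+2*j+1))]
  simp

lemma coeff_zero_Vv (s u a b c : ℕ) : PowerSeries.coeff 0 (Vv s u a b c) = 1 := by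
  rw [PowerSeries.coeff_zero_eq_constantCoeff, constC_Vv]

lemma pos_mul {f g : PowerSeries ℚ} (hf : ∀ m, 0 < PowerSeries.coeff m f) (hg : NN g)
    (hg0 : 0 < PowerSeries.coeff 0 g) : ∀ m, 0 < PowerSeries.coeff m (f * g) := by
  intro m
  rw [PowerSeries.coeff_mul]
  apply Finset.sum_pos'
  · intro p _
    exact mul_nonneg (hf p.1).le (hg p.2)
  · refine ⟨(m, 0), ?_, ?_⟩
    · simp
    · exact mul_pos (hf m) hg0

lemma coeff_Gg_one (m : ℕ) : PowerSeries.coeff m (Gg 1) = 1 := by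
  simp [Gg]

lemma pos_Vv : ∀ c s a b : ℕ, c ≤ a → c ≤ b → 1 ≤ b →
    ∀ m, 0 < PowerSeries.coeff m (Vv s 0 a b c) := by
  intro c
  induction c with
  | zero =>
      intro s a b _ _ hb
      obtain ⟨b', rfl⟩ : ∃ b', b = b' + 1 := ⟨b - 1, by omega⟩
      have hV : Vv s 0 a (b'+1) 0 = Gg 1 * (Px s a * Py 1 b') := by
        unfold Vv
        rw [Py_succ]
        have : Nc s 0 0 = 1 := by unfold Nc; rw [Finset.prod_range_zero]
        rw [this, one_mul]
        have : Gg (2*0+1) = Gg 1 := by norm_num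
        rw [this]
        ring
      rw [hV]
      apply pos_mul
      · intro m; rw [coeff_Gg_one]; norm_num
      · exact NN_mul (NN_Px s a) (NN_Py 1 b')
      · rw [PowerSeries.coeff_zero_eq_constantCoeff]
        unfold Px Py
        rw [map_mul, map_prod, map_prod,
          Finset.prod_congr rfl (fun i _ => constC_Gg (2*s+2*i+1)),
          Finset.prod_congr rfl (fun j _ => constC_Gg (2*1+2*j+1))]
        simp
  | succ c ih =>
      intro s a b ha hb _
      obtain ⟨a', rfl⟩ : ∃ a', a = a' + 1 := ⟨a - 1, by omega⟩
      obtain ⟨b', rfl⟩ : ∃ b', b = b' + 1 := ⟨b - 1, by omega⟩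
      rw [Vv_rec]
      have hX1 : ((PowerSeries.X : PowerSeries ℚ)) ^ (2*0+1) = (PowerSeries.X : PowerSeries ℚ) := by
        norm_num
      rw [hX1]
      have hNN1 : NN (Vv s (0+1) (a'+1) b' c) := NN_Vv c s 1 (a'+1) b' (by omega) (by omega)
      intro m
      rw [map_add]
      rcases Nat.eq_zero_or_pos m with rfl | hm
      · have hz : PowerSeries.coeff 0 ((PowerSeries.X : PowerSeries ℚ) * Vv (s+1) 0 a' (b'+1) c) = 0 := by
          rw [PowerSeries.coeff_zero_eq_constantCoeff, map_mul, PowerSeries.constantCoeff_X,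
            zero_mul]
        rw [hz, add_zero]
        have h0 : PowerSeries.coeff 0 (Vv s (0+1) (a'+1) b' c) = 1 := coeff_zero_Vv _ _ _ _ _
        rw [h0]; norm_num
      · obtain ⟨m', rfl⟩ : ∃ m', m = m' + 1 := ⟨m - 1, by omega⟩
        have hpos : 0 < PowerSeries.coeff (m'+1) ((PowerSeries.X : PowerSeries ℚ) * Vv (s+1) 0 a' (b'+1) c) := by
          rw [PowerSeries.coeff_succ_X_mul]
          exact ih (s+1) a' (b'+1) (by omega) (by omega) (by omega) m'
        have := hNN1 (m'+1)
        linarith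

/-- For every nonnegative integer `n`, the formal power series
`(q²;q²)_n / (q;q²)_{n+1}²` has all coefficients strictly positive. -/
theorem stmt_5 (n : ℕ) :
    ∀ m : ℕ, 0 < PowerSeries.coeff m (P2 2 n * (P2 1 (n + 1) ^ 2)⁻¹) := by
  have hP2num : P2 2 n = Nc 0 0 n := by
    unfold P2 Nc
    apply Finset.prod_congr rfl
    intro j _
    congr 2
    ring
  have hmul : P2 1 (n+1) ^ 2 * (Px 0 (n+1) * Py 0 (n+1)) = 1 := by
    have hPx : P2 1 (n+1) * Px 0 (n+1) = 1 := by
      unfold P2 Px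
      rw [← Finset.prod_mul_distrib]
      rw [Finset.prod_congr rfl (fun j (_ : j ∈ Finset.range (n+1)) => ?_)]
      · exact Finset.prod_const_one
      · have he : 1 + 2*j = 2*j + 1 := by ring
        have he2 : 2*0 + 2*j + 1 = 2*j + 1 := by ring
        rw [he, he2]
        exact one_sub_X_pow_mul_Gg (2*j)
    have hPy : P2 1 (n+1) * Py 0 (n+1) = 1 := by
      unfold P2 Py
      rw [← Finset.prod_mul_distrib]
      rw [Finset.prod_congr rfl (fun j (_ : j ∈ Finset.range (n+1)) => ?_)]
      · exact Finset.prod_const_one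
      · have he : 1 + 2*j = 2*j + 1 := by ring
        have he2 : 2*0 + 2*j + 1 = 2*j + 1 := by ring
        rw [he, he2]
        exact one_sub_X_pow_mul_Gg (2*j)
    calc P2 1 (n+1) ^ 2 * (Px 0 (n+1) * Py 0 (n+1))
        = (P2 1 (n+1) * Px 0 (n+1)) * (P2 1 (n+1) * Py 0 (n+1)) := by ring
      _ = 1 := by rw [hPx, hPy, one_mul]
  have hconst : PowerSeries.constantCoeff (P2 1 (n+1) ^ 2) ≠ 0 := by
    have h1 : PowerSeries.constantCoeff (P2 1 (n+1)) = 1 := by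
      unfold P2
      rw [map_prod]
      rw [Finset.prod_congr rfl (fun j (_ : j ∈ Finset.range (n+1)) => ?_)]
      · exact Finset.prod_const_one
      · rw [map_sub, map_one, map_pow, PowerSeries.constantCoeff_X, zero_pow (by omega), sub_zero]
    rw [map_pow, h1]
    norm_num
  have hinv : (P2 1 (n+1) ^ 2)⁻¹ = Px 0 (n+1) * Py 0 (n+1) := by
    calc (P2 1 (n+1) ^ 2)⁻¹
        = (P2 1 (n+1) ^ 2)⁻¹ * (P2 1 (n+1) ^ 2 * (Px 0 (n+1) * Py 0 (n+1))) := by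
          rw [hmul, mul_one]
      _ = ((P2 1 (n+1) ^ 2)⁻¹ * P2 1 (n+1) ^ 2) * (Px 0 (n+1) * Py 0 (n+1)) := by ring
      _ = Px 0 (n+1) * Py 0 (n+1) := by
          rw [PowerSeries.inv_mul_cancel _ hconst, one_mul]
  have hV : P2 2 n * (P2 1 (n + 1) ^ 2)⁻¹ = Vv 0 0 (n+1) (n+1) n := by
    rw [hP2num, hinv]
    rfl
  rw [hV]
  exact pos_Vv n 0 (n+1) (n+1) (by omega) (by omega) (by omega)
end

section
/- Heine's first transformation: ₂φ₁(a,b;c;q,z) = (b;q)_∞ (az;q)_∞ / ((c;q)_∞ (z;q)_∞) · ₂φ₁(c/b, z; az; q, b), i.e. ∑_{n≥0} (a;q)_n (b;q)_n z^n / ((q;q)_n (c;q)_n) = (b;q)_∞ (az;q)_∞ / ((c;q)_∞ (z;q)_∞) · ∑_{n≥0} (c/b;q)_n (z;q)_n b^n / ((q;q)_n (az;q)_n), as formal power series (or for |q|,|z|,|b| < 1). -/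
open Finset Filter

namespace Heine

noncomputable def E (q w : ℂ) (n : ℕ) : ℂ := ∏ k ∈ Finset.range n, (1 - w * q ^ k)

variable {q : ℂ}

lemma sum_norm_le (hq : ‖q‖ < 1) (w : ℂ) (n : ℕ) :
    ∑ k ∈ range n, ‖w‖ * ‖q‖ ^ k ≤ ‖w‖ / (1 - ‖q‖) := by
  rw [← mul_sum]
  rw [div_eq_mul_inv]
  gcongr
  exact (Summable.sum_le_tsum _ (fun k _ => by positivity)
    (summable_geometric_of_lt_one (norm_nonneg q) hq)).trans
    (le_of_eq (tsum_geometric_of_lt_one (norm_nonneg q) hq))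

lemma E_norm_le (hq : ‖q‖ < 1) (w : ℂ) (n : ℕ) :
    ‖E q w n‖ ≤ Real.exp (‖w‖ / (1 - ‖q‖)) := by
  calc ‖E q w n‖ ≤ ∏ k ∈ range n, ‖(1 : ℂ) - w * q ^ k‖ := norm_prod_le _ _
    _ ≤ ∏ k ∈ range n, Real.exp (‖w‖ * ‖q‖ ^ k) := by
        apply Finset.prod_le_prod (fun k _ => norm_nonneg _)
        intro k _
        calc ‖(1:ℂ) - w * q ^ k‖ ≤ ‖(1:ℂ)‖ + ‖w * q ^ k‖ := norm_sub_le _ _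
          _ ≤ 1 + ‖w‖ * ‖q‖ ^ k := by
              rw [norm_one]; gcongr; rw [norm_mul, norm_pow]
          _ ≤ Real.exp (‖w‖ * ‖q‖ ^ k) := Real.add_one_le_exp _ |>.trans_eq' (by ring_nf)
    _ = Real.exp (∑ k ∈ range n, ‖w‖ * ‖q‖ ^ k) := (Real.exp_sum _ _).symm
    _ ≤ _ := Real.exp_le_exp.2 (sum_norm_le hq w n)

lemma weier {s : Finset ℕ} {f : ℕ → ℝ} (h0 : ∀ k ∈ s, 0 ≤ f k) (h1 : ∀ k ∈ s, f k ≤ 1) :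
    1 - ∑ k ∈ s, f k ≤ ∏ k ∈ s, (1 - f k) := by
  classical
  induction s using Finset.induction with
  | empty => simp
  | insert a s hx ih =>
    rw [Finset.sum_insert hx, Finset.prod_insert hx]
    have h0' : ∀ k ∈ s, 0 ≤ f k := fun k hk => h0 k (Finset.mem_insert_of_mem hk)
    have h1' : ∀ k ∈ s, f k ≤ 1 := fun k hk => h1 k (Finset.mem_insert_of_mem hk)
    have hs : 0 ≤ ∑ k ∈ s, f k := Finset.sum_nonneg h0'
    have ha0 := h0 a (Finset.mem_insert_self a s)
    have ha1 := h1 a (Finset.mem_insert_self a s)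
    nlinarith [ih h0' h1']

lemma E_lower (hq : ‖q‖ < 1) {w : ℂ} (hw : ∀ k, 1 - w * q ^ k ≠ 0) :
    ∃ δ : ℝ, 0 < δ ∧ ∀ n, δ ≤ ‖E q w n‖ := by
  have hq0 : (0:ℝ) < 1 - ‖q‖ := by linarith
  have htend : Tendsto (fun K => ‖q‖ ^ K * (‖w‖ / (1 - ‖q‖) + ‖w‖ + 1)) atTop (nhds 0) := by
    simpa using (tendsto_pow_atTop_nhds_zero_of_lt_one (norm_nonneg q) hq).mul_const
      (‖w‖ / (1 - ‖q‖) + ‖w‖ + 1)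
  obtain ⟨K, hK⟩ := (htend.eventually (gt_mem_nhds (by norm_num : (0:ℝ) < 1/2))).exists
  have hterm : ∀ k, K ≤ k → ‖w‖ * ‖q‖ ^ k ≤ 1/2 := by
    intro k hk
    have hA : ‖q‖ ^ k ≤ ‖q‖ ^ K := pow_le_pow_of_le_one (norm_nonneg q) hq.le hk
    have hB : ‖w‖ * ‖q‖ ^ k ≤ ‖w‖ * ‖q‖ ^ K := by
      apply mul_le_mul_of_nonneg_left hA (norm_nonneg w)
    have hC : ‖w‖ * ‖q‖ ^ K ≤ ‖q‖ ^ K * (‖w‖ / (1 - ‖q‖) + ‖w‖ + 1) := by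
      rw [mul_comm]
      apply mul_le_mul_of_nonneg_left _ (pow_nonneg (norm_nonneg q) K)
      have : (0:ℝ) ≤ ‖w‖ / (1 - ‖q‖) := by positivity
      linarith
    linarith
  have hsum : ∀ n, ∑ k ∈ Ico K n, ‖w‖ * ‖q‖ ^ k ≤ 1/2 := by
    intro n
    rcases le_or_gt K n with h | h
    · rw [Finset.sum_Ico_eq_sum_range]
      have hcg : ∀ j ∈ range (n - K), ‖w‖ * ‖q‖ ^ (K + j) = ‖q‖ ^ K * (‖w‖ * ‖q‖ ^ j) := by
        intro j _; rw [pow_add]; ring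
      rw [Finset.sum_congr rfl hcg, ← mul_sum]
      calc ‖q‖ ^ K * ∑ j ∈ range (n - K), ‖w‖ * ‖q‖ ^ j
          ≤ ‖q‖ ^ K * (‖w‖ / (1 - ‖q‖)) :=
            mul_le_mul_of_nonneg_left (sum_norm_le hq w (n - K)) (pow_nonneg (norm_nonneg q) K)
        _ ≤ ‖q‖ ^ K * (‖w‖ / (1 - ‖q‖) + ‖w‖ + 1) := by
            apply mul_le_mul_of_nonneg_left _ (pow_nonneg (norm_nonneg q) K)
            linarith [norm_nonneg w]
        _ ≤ 1/2 := hK.le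
    · rw [Finset.Ico_eq_empty (by omega)]; norm_num
  have hpos : ∀ n, 0 < ‖E q w n‖ := by
    intro n
    rw [norm_pos_iff]
    exact Finset.prod_ne_zero_iff.2 fun k _ => hw k
  set m := (Finset.range (K+1)).inf' (by simp) (fun n => ‖E q w n‖) with hm
  have hmpos : 0 < m := by
    rw [hm]
    apply (Finset.lt_inf'_iff _).2
    intro n _
    exact hpos n
  refine ⟨m/2, by positivity, fun n => ?_⟩
  rcases le_or_gt n K with h | h
  · have : m ≤ ‖E q w n‖ := Finset.inf'_le _ (by simp; omega)
    linarith
  · have hsplit : E q w n = E q w K * ∏ k ∈ Ico K n, (1 - w * q ^ k) := by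
      rw [E, E, Finset.prod_range_mul_prod_Ico _ h.le]
    rw [hsplit, norm_mul]
    have h1 : (1:ℝ)/2 ≤ ‖∏ k ∈ Ico K n, (1 - w * q ^ k)‖ := by
      rw [norm_prod]
      calc (1:ℝ)/2 ≤ 1 - ∑ k ∈ Ico K n, ‖w‖ * ‖q‖ ^ k := by linarith [hsum n]
        _ ≤ ∏ k ∈ Ico K n, (1 - ‖w‖ * ‖q‖ ^ k) := by
            apply weier (fun k _ => by positivity)
            intro k hk
            linarith [hterm k (Finset.mem_Ico.1 hk).1]
        _ ≤ ∏ k ∈ Ico K n, ‖(1:ℂ) - w * q ^ k‖ := by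
            apply Finset.prod_le_prod
            · intro k hk
              linarith [hterm k (Finset.mem_Ico.1 hk).1]
            · intro k hk
              calc 1 - ‖w‖ * ‖q‖ ^ k = 1 - ‖w * q ^ k‖ := by rw [norm_mul, norm_pow]
                _ ≤ ‖(1:ℂ) - w * q ^ k‖ := by
                    have := norm_sub_norm_le (1:ℂ) (w * q ^ k); simpa using this
    have h2 : m ≤ ‖E q w K‖ := Finset.inf'_le _ (by simp)
    calc m/2 = m * (1/2) := by ring
      _ ≤ ‖E q w K‖ * ‖∏ k ∈ Ico K n, (1 - w * q ^ k)‖ :=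
          mul_le_mul h2 h1 (by norm_num) (norm_nonneg _)

lemma fact_small (hq : ‖q‖ < 1) {w : ℂ} (hw : ‖w‖ < 1) (k : ℕ) : 1 - w * q ^ k ≠ 0 := by
  intro h
  have h1 : w * q ^ k = 1 := by linear_combination -h
  have : ‖w * q ^ k‖ < 1 := by
    rw [norm_mul, norm_pow]
    calc ‖w‖ * ‖q‖ ^ k ≤ ‖w‖ * 1 := by
          apply mul_le_mul_of_nonneg_left _ (norm_nonneg w)
          exact pow_le_one₀ (norm_nonneg q) hq.le
      _ < 1 := by rwa [mul_one]
  rw [h1, norm_one] at this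
  exact lt_irrefl _ this

lemma multipliableE (hq : ‖q‖ < 1) (w : ℂ) : Multipliable (fun k => 1 - w * q ^ k) := by
  by_cases hw : ∀ k, 1 - w * q ^ k ≠ 0
  · have hsum : Summable (fun k => Complex.log (1 - w * q ^ k)) := by
      apply Summable.of_norm_bounded_eventually_nat (g := fun k => 3/2 * (‖w‖ * ‖q‖ ^ k))
      · exact ((summable_geometric_of_lt_one (norm_nonneg q) hq).mul_left ‖w‖).mul_left (3/2)
      · have hev : ∀ᶠ k in atTop, ‖w‖ * ‖q‖ ^ k ≤ 1/2 := by
          have := (tendsto_pow_atTop_nhds_zero_of_lt_one (norm_nonneg q) hq).const_mul ‖w‖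
          simp only [mul_zero] at this
          exact this.eventually_le_const (by norm_num)
        filter_upwards [hev] with k hk
        have : ‖-(w * q ^ k)‖ ≤ 1/2 := by rw [norm_neg, norm_mul, norm_pow]; exact hk
        calc ‖Complex.log (1 - w * q ^ k)‖ = ‖Complex.log (1 + -(w * q ^ k))‖ := by
              rw [sub_eq_add_neg]
          _ ≤ 3/2 * ‖-(w * q ^ k)‖ := Complex.norm_log_one_add_half_le_self this
          _ = 3/2 * (‖w‖ * ‖q‖ ^ k) := by rw [norm_neg, norm_mul, norm_pow]
    exact Complex.multipliable_of_summable_log hsum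
  · push_neg at hw
    obtain ⟨j, hj⟩ := hw
    refine ⟨0, ?_⟩
    apply tendsto_const_nhds.congr'
    filter_upwards [eventually_ge_atTop ({j} : Finset ℕ)] with s hs
    exact (Finset.prod_eq_zero (hs (Finset.mem_singleton_self j)) hj).symm

lemma tendstoE (hq : ‖q‖ < 1) (w : ℂ) :
    Tendsto (fun n => E q w n) atTop (nhds (∏' k, (1 - w * q ^ k))) :=
  (multipliableE hq w).hasProd.tendsto_prod_nat

lemma tprod_ne (hq : ‖q‖ < 1) {w : ℂ} (hw : ∀ k, 1 - w * q ^ k ≠ 0) :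
    (∏' k : ℕ, (1 - w * q ^ k)) ≠ 0 := by
  obtain ⟨δ, hδ, hδle⟩ := E_lower hq hw
  have : δ ≤ ‖∏' k : ℕ, (1 - w * q ^ k)‖ :=
    ge_of_tendsto' ((tendstoE hq w).norm) hδle
  intro h
  rw [h, norm_zero] at this
  linarith

lemma tprod_split (hq : ‖q‖ < 1) (w : ℂ) (n : ℕ) :
    (∏' k : ℕ, (1 - w * q ^ k)) = E q w n * ∏' k : ℕ, (1 - (w * q ^ n) * q ^ k) := by
  have hg : (fun k => 1 - (w * q ^ n) * q ^ k) = fun k => 1 - w * q ^ (n + k) := by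
    funext k; rw [pow_add]; ring
  have h2 : Tendsto (fun N => E q w (n + N)) atTop
      (nhds (E q w n * ∏' k : ℕ, (1 - (w * q ^ n) * q ^ k))) := by
    have := (tendstoE hq (w * q ^ n)).const_mul (E q w n)
    apply this.congr
    intro N
    rw [E, E, E, Finset.prod_range_add]
    congr 1
    apply Finset.prod_congr rfl
    intro k _
    rw [pow_add]; ring
  have h1 : Tendsto (fun N => E q w (n + N)) atTop (nhds (∏' k : ℕ, (1 - w * q ^ k))) := by
    have := (tendstoE hq w).comp (tendsto_add_atTop_nat n)
    apply this.congr
    intro N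
    simp [Function.comp, Nat.add_comm]
  exact tendsto_nhds_unique h1 h2

noncomputable def cE (q w : ℂ) (n : ℕ) : ℂ := E q w n / E q q n

noncomputable def Sf (q w t : ℂ) : ℂ := ∑' n, cE q w n * t ^ n

lemma E_q_ne (hfq : ∀ k : ℕ, 1 - q * q ^ k ≠ 0) (n : ℕ) : E q q n ≠ 0 :=
  Finset.prod_ne_zero_iff.2 fun k _ => hfq k

lemma cE_zero (w : ℂ) : cE q w 0 = 1 := by simp [cE, E]

lemma cE_rec (hfq : ∀ k : ℕ, 1 - q * q ^ k ≠ 0) (w : ℂ) (n : ℕ) :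
    cE q w (n + 1) * (1 - q * q ^ n) = cE q w n * (1 - w * q ^ n) := by
  have h1 : E q w (n + 1) = E q w n * (1 - w * q ^ n) := Finset.prod_range_succ _ _
  have h2 : E q q (n + 1) = E q q n * (1 - q * q ^ n) := Finset.prod_range_succ _ _
  rw [cE, cE, h1, h2]
  simp only [div_mul_eq_mul_div]
  rw [div_eq_div_iff (mul_ne_zero (E_q_ne hfq n) (hfq n)) (E_q_ne hfq n)]
  ring

lemma cE_bound (hq : ‖q‖ < 1) (hfq : ∀ k : ℕ, 1 - q * q ^ k ≠ 0) (w : ℂ) :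
    ∃ M : ℝ, 0 < M ∧ ∀ n, ‖cE q w n‖ ≤ M := by
  obtain ⟨δ, hδ, hδle⟩ := E_lower hq hfq
  refine ⟨Real.exp (‖w‖ / (1 - ‖q‖)) / δ, by positivity, fun n => ?_⟩
  rw [cE, norm_div]
  apply div_le_div₀ (Real.exp_nonneg _) (E_norm_le hq w n) hδ (hδle n)

lemma summable_aux {f : ℕ → ℂ} {C r : ℝ} (hr0 : 0 ≤ r) (hr : r < 1)
    (h : ∀ n, ‖f n‖ ≤ C * r ^ n) : Summable f :=
  Summable.of_norm_bounded ((summable_geometric_of_lt_one hr0 hr).mul_left C) h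

lemma norm_pow_le_of_le {s t : ℂ} (h : ‖s‖ ≤ ‖t‖) (n : ℕ) : ‖s‖ ^ n ≤ ‖t‖ ^ n :=
  pow_le_pow_left₀ (norm_nonneg s) h n

lemma funceq (hq : ‖q‖ < 1) (hfq : ∀ k : ℕ, 1 - q * q ^ k ≠ 0) (w : ℂ) {t : ℂ}
    (ht : ‖t‖ < 1) : (1 - t) * Sf q w t = (1 - w * t) * Sf q w (q * t) := by
  obtain ⟨M, hM, hMle⟩ := cE_bound hq hfq w
  have ht0 : (0:ℝ) ≤ ‖t‖ := norm_nonneg t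
  have hqt : ‖q * t‖ ≤ ‖t‖ := by
    rw [norm_mul]
    nlinarith [norm_nonneg q]
  have hpow : ∀ n : ℕ, ‖t‖ ^ (n+1) ≤ ‖t‖ ^ n := fun n =>
    pow_le_pow_of_le_one ht0 ht.le (Nat.le_succ n)
  -- summabilities
  have hs1 : Summable (fun n => cE q w n * t ^ n) := by
    apply summable_aux ht0 ht (C := M)
    intro n
    rw [norm_mul, norm_pow]
    exact mul_le_mul_of_nonneg_right (hMle n) (by positivity)
  have hs2 : Summable (fun n => cE q w n * t ^ (n+1)) := by
    apply summable_aux ht0 ht (C := M)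
    intro n
    rw [norm_mul, norm_pow]
    calc ‖cE q w n‖ * ‖t‖ ^ (n+1) ≤ M * ‖t‖ ^ (n+1) :=
          mul_le_mul_of_nonneg_right (hMle n) (by positivity)
      _ ≤ M * ‖t‖ ^ n := mul_le_mul_of_nonneg_left (hpow n) hM.le
  have hs3 : Summable (fun n => cE q w n * (q * t) ^ n) := by
    apply summable_aux ht0 ht (C := M)
    intro n
    rw [norm_mul, norm_pow]
    exact mul_le_mul (hMle n) (norm_pow_le_of_le hqt n) (by positivity) hM.le
  have hs4 : Summable (fun n => cE q w n * q ^ n * t ^ (n+1)) := by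
    apply summable_aux ht0 ht (C := M)
    intro n
    rw [norm_mul, norm_mul, norm_pow, norm_pow]
    have h1 : ‖q‖ ^ n ≤ 1 := pow_le_one₀ (norm_nonneg q) hq.le
    have h2 : ‖t‖ ^ (n+1) ≤ ‖t‖ ^ n := hpow n
    have h3 : ‖cE q w n‖ * ‖q‖ ^ n ≤ M := by
      have := mul_le_mul (hMle n) h1 (pow_nonneg (norm_nonneg q) n) hM.le
      simpa using this
    exact mul_le_mul h3 h2 (by positivity) hM.le
  set f := fun n : ℕ => cE q w n * (1 - q ^ n) * t ^ n with hf
  set g := fun n : ℕ => cE q w n * (1 - w * q ^ n) * t ^ (n+1) with hg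
  have hsf : Summable f := by
    apply Summable.congr (f := fun n => cE q w n * t ^ n - cE q w n * q ^ n * t ^ n)
    · apply Summable.sub hs1
      apply summable_aux ht0 ht (C := M)
      intro n
      rw [norm_mul, norm_mul, norm_pow, norm_pow]
      have h1 : ‖q‖ ^ n ≤ 1 := pow_le_one₀ (norm_nonneg q) hq.le
      have h3 : ‖cE q w n‖ * ‖q‖ ^ n ≤ M := by
        have := mul_le_mul (hMle n) h1 (pow_nonneg (norm_nonneg q) n) hM.le
        simpa using this
      exact mul_le_mul h3 le_rfl (by positivity) hM.le
    · intro n; rw [hf]; ring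
  have hsg : Summable g := by
    apply Summable.congr
      (f := fun n => cE q w n * t ^ (n+1) - w * (cE q w n * q ^ n * t ^ (n+1)))
    · exact hs2.sub (hs4.mul_left w)
    · intro n; rw [hg]; ring
  have hfg : ∀ n, f (n + 1) = g n := by
    intro n
    rw [hf, hg]
    simp only []
    have : (1 : ℂ) - q ^ (n+1) = 1 - q * q ^ n := by rw [pow_succ]; ring
    rw [this, cE_rec hfq w n]
  have hf0 : f 0 = 0 := by simp [hf]
  have hsum_fg : ∑' n, f n = ∑' n, g n := by
    rw [Summable.tsum_eq_zero_add hsf, hf0, zero_add]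
    exact tsum_congr hfg
  -- main computation
  have hA : (1 - t) * Sf q w t = ∑' n, (cE q w n * t ^ n - cE q w n * t ^ (n+1)) := by
    rw [Summable.tsum_sub hs1 hs2, Sf]
    have : ∑' n, cE q w n * t ^ (n+1) = t * ∑' n, cE q w n * t ^ n := by
      rw [← tsum_mul_left]
      apply tsum_congr
      intro n; ring
    rw [this]
    ring
  have hB : (1 - w * t) * Sf q w (q * t) =
      ∑' n, (cE q w n * (q * t) ^ n - w * (cE q w n * q ^ n * t ^ (n+1))) := by
    rw [Summable.tsum_sub hs3 ((hs4.mul_left w)), Sf]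
    have hcg : ∀ n : ℕ, w * (cE q w n * q ^ n * t ^ (n+1)) =
        (w * t) * (cE q w n * (q * t) ^ n) := by
      intro n; rw [mul_pow]; ring
    have : ∑' n, w * (cE q w n * q ^ n * t ^ (n+1)) =
        w * t * ∑' n, cE q w n * (q * t) ^ n := by
      rw [tsum_congr hcg, tsum_mul_left]
    rw [this]
    ring
  have hdiff : (1 - t) * Sf q w t - (1 - w * t) * Sf q w (q * t) = ∑' n, (f n - g n) := by
    rw [hA, hB, ← Summable.tsum_sub (hs1.sub hs2) (hs3.sub (hs4.mul_left w))]
    apply tsum_congr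
    intro n
    rw [hf, hg]
    simp only []
    rw [mul_pow]
    ring
  have : (∑' n, (f n - g n)) = 0 := by
    rw [Summable.tsum_sub hsf hsg, hsum_fg, sub_self]
  linear_combination hdiff + this

lemma norm_qpow_t (hq : ‖q‖ < 1) {t : ℂ} (ht : ‖t‖ < 1) (N : ℕ) : ‖q ^ N * t‖ ≤ ‖t‖ := by
  rw [norm_mul, norm_pow]
  have h1 : ‖q‖ ^ N ≤ 1 := pow_le_one₀ (norm_nonneg q) hq.le
  nlinarith [norm_nonneg t]

lemma iter (hq : ‖q‖ < 1) (hfq : ∀ k : ℕ, 1 - q * q ^ k ≠ 0) (w : ℂ) {t : ℂ}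
    (ht : ‖t‖ < 1) (N : ℕ) :
    E q t N * Sf q w t = E q (w * t) N * Sf q w (q ^ N * t) := by
  induction N with
  | zero => simp [E]
  | succ N ih =>
    have hstep := funceq hq hfq w (lt_of_le_of_lt (norm_qpow_t hq ht N) ht)
    have e1 : E q t (N + 1) = E q t N * (1 - t * q ^ N) := Finset.prod_range_succ _ _
    have e2 : E q (w * t) (N + 1) = E q (w * t) N * (1 - (w * t) * q ^ N) :=
      Finset.prod_range_succ _ _
    have e3 : (1 : ℂ) - t * q ^ N = 1 - q ^ N * t := by ring
    have e4 : q * (q ^ N * t) = q ^ (N + 1) * t := by rw [pow_succ]; ring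
    have e5 : w * (q ^ N * t) = (w * t) * q ^ N := by ring
    calc E q t (N + 1) * Sf q w t = (E q t N * Sf q w t) * (1 - t * q ^ N) := by
          rw [e1]; ring
      _ = (E q (w * t) N * Sf q w (q ^ N * t)) * (1 - t * q ^ N) := by rw [ih]
      _ = E q (w * t) N * ((1 - q ^ N * t) * Sf q w (q ^ N * t)) := by rw [e3]; ring
      _ = E q (w * t) N * ((1 - w * (q ^ N * t)) * Sf q w (q * (q ^ N * t))) := by
          rw [hstep]
      _ = E q (w * t) (N + 1) * Sf q w (q ^ (N + 1) * t) := by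
          rw [e2, e4, e5]; ring

lemma Sf_tendsto_one (hq : ‖q‖ < 1) (hfq : ∀ k : ℕ, 1 - q * q ^ k ≠ 0) (w : ℂ) {t : ℂ}
    (ht : ‖t‖ < 1) :
    Tendsto (fun N => Sf q w (q ^ N * t)) atTop (nhds 1) := by
  obtain ⟨M, hM, hMle⟩ := cE_bound hq hfq w
  have key : ∀ s : ℂ, ‖s‖ ≤ ‖t‖ → ‖Sf q w s - 1‖ ≤ M * (1 - ‖t‖)⁻¹ * ‖s‖ := by
    intro s hs
    have hs1 : ‖s‖ < 1 := lt_of_le_of_lt hs ht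
    have hsum : Summable (fun n => cE q w n * s ^ n) := by
      apply summable_aux (norm_nonneg s) hs1 (C := M)
      intro n
      rw [norm_mul, norm_pow]
      exact mul_le_mul_of_nonneg_right (hMle n) (by positivity)
    have hsplit : Sf q w s = 1 + ∑' n : ℕ, cE q w n.succ * s ^ n.succ := by
      rw [Sf, Summable.tsum_eq_zero_add hsum, cE_zero]
      simp
    rw [hsplit]
    simp only [add_sub_cancel_left]
    have hgeo : HasSum (fun n : ℕ => M * ‖s‖ * ‖t‖ ^ n) (M * ‖s‖ * (1 - ‖t‖)⁻¹) := by
      exact (hasSum_geometric_of_lt_one (norm_nonneg t) ht).mul_left (M * ‖s‖)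
    have hbd : ∀ n : ℕ, ‖cE q w n.succ * s ^ n.succ‖ ≤ M * ‖s‖ * ‖t‖ ^ n := by
      intro n
      rw [norm_mul, norm_pow]
      have h1 : ‖s‖ ^ n.succ = ‖s‖ * ‖s‖ ^ n := by rw [pow_succ]; ring
      have h2 : ‖s‖ ^ n ≤ ‖t‖ ^ n := pow_le_pow_left₀ (norm_nonneg s) hs n
      calc ‖cE q w n.succ‖ * ‖s‖ ^ n.succ ≤ M * ‖s‖ ^ n.succ :=
            mul_le_mul_of_nonneg_right (hMle n.succ) (by positivity)
        _ = M * ‖s‖ * ‖s‖ ^ n := by rw [h1]; ring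
        _ ≤ M * ‖s‖ * ‖t‖ ^ n := by
            apply mul_le_mul_of_nonneg_left h2 (by positivity)
    calc ‖∑' n : ℕ, cE q w n.succ * s ^ n.succ‖ ≤ M * ‖s‖ * (1 - ‖t‖)⁻¹ :=
          tsum_of_norm_bounded hgeo hbd
      _ = M * (1 - ‖t‖)⁻¹ * ‖s‖ := by ring
  have hz : Tendsto (fun N : ℕ => M * (1 - ‖t‖)⁻¹ * ‖q ^ N * t‖) atTop (nhds 0) := by
    have h1 : Tendsto (fun N : ℕ => ‖q‖ ^ N) atTop (nhds 0) :=
      tendsto_pow_atTop_nhds_zero_of_lt_one (norm_nonneg q) hq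
    have := (h1.const_mul (M * (1 - ‖t‖)⁻¹ * ‖t‖))
    rw [mul_zero] at this
    apply this.congr
    intro N
    rw [norm_mul, norm_pow]
    ring
  have : Tendsto (fun N => Sf q w (q ^ N * t) - 1) atTop (nhds 0) := by
    apply squeeze_zero_norm _ hz
    intro N
    exact key _ (norm_qpow_t hq ht N)
  have h2 := this.add_const 1
  simp only [sub_add_cancel, zero_add] at h2
  exact h2

lemma qbinom (hq : ‖q‖ < 1) (hfq : ∀ k : ℕ, 1 - q * q ^ k ≠ 0) (w : ℂ) {t : ℂ}
    (ht : ‖t‖ < 1) :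
    (∏' k : ℕ, (1 - t * q ^ k)) * Sf q w t = ∏' k : ℕ, (1 - (w * t) * q ^ k) := by
  have h1 : Tendsto (fun N => E q t N * Sf q w t) atTop
      (nhds ((∏' k : ℕ, (1 - t * q ^ k)) * Sf q w t)) :=
    (tendstoE hq t).mul_const _
  have h2 : Tendsto (fun N => E q (w * t) N * Sf q w (q ^ N * t)) atTop
      (nhds ((∏' k : ℕ, (1 - (w * t) * q ^ k)) * 1)) :=
    (tendstoE hq (w * t)).mul (Sf_tendsto_one hq hfq w ht)
  rw [mul_one] at h2
  exact tendsto_nhds_unique (h1.congr (fun N => iter hq hfq w ht N)) h2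

end Heine

open Finset Heine

set_option maxHeartbeats 2000000 in
/-- Heine's first transformation:
`₂φ₁(a,b;c;q,z) = (b;q)_∞ (az;q)_∞ / ((c;q)_∞ (z;q)_∞) · ₂φ₁(c/b, z; az; q, b)`,
for complex parameters with `|q|, |z|, |b| < 1` and nonvanishing denominators. -/
theorem stmt_7 (a b c q z : ℂ) (hq : ‖q‖ < 1) (hz : ‖z‖ < 1) (hb : ‖b‖ < 1)
    (hb0 : b ≠ 0)
    (hqq : ∀ n : ℕ, ∏ k ∈ Finset.range n, (1 - q ^ (k + 1)) ≠ 0)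
    (hc : ∀ n : ℕ, ∏ k ∈ Finset.range n, (1 - c * q ^ k) ≠ 0)
    (haz : ∀ n : ℕ, ∏ k ∈ Finset.range n, (1 - a * z * q ^ k) ≠ 0)
    (hcinf : ∏' k : ℕ, (1 - c * q ^ k) ≠ 0)
    (hzinf : ∏' k : ℕ, (1 - z * q ^ k) ≠ 0) :
    ∑' n : ℕ, (∏ k ∈ Finset.range n, (1 - a * q ^ k)) *
        (∏ k ∈ Finset.range n, (1 - b * q ^ k)) * z ^ n /
        ((∏ k ∈ Finset.range n, (1 - q ^ (k + 1))) *
          ∏ k ∈ Finset.range n, (1 - c * q ^ k))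
      = (∏' k : ℕ, (1 - b * q ^ k)) * (∏' k : ℕ, (1 - a * z * q ^ k)) /
          ((∏' k : ℕ, (1 - c * q ^ k)) * ∏' k : ℕ, (1 - z * q ^ k)) *
        ∑' n : ℕ, (∏ k ∈ Finset.range n, (1 - c / b * q ^ k)) *
          (∏ k ∈ Finset.range n, (1 - z * q ^ k)) * b ^ n /
          ((∏ k ∈ Finset.range n, (1 - q ^ (k + 1))) *
            ∏ k ∈ Finset.range n, (1 - a * z * q ^ k)) := by
  classical
  -- factor-level nonvanishing
  have hfq : ∀ k : ℕ, 1 - q * q ^ k ≠ 0 := by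
    intro k
    have h := Finset.prod_ne_zero_iff.1 (hqq (k + 1)) k (Finset.self_mem_range_succ k)
    rw [pow_succ'] at h
    exact h
  have hfc : ∀ k : ℕ, 1 - c * q ^ k ≠ 0 := fun k =>
    Finset.prod_ne_zero_iff.1 (hc (k + 1)) k (Finset.self_mem_range_succ k)
  have hfaz : ∀ k : ℕ, 1 - a * z * q ^ k ≠ 0 := fun k =>
    Finset.prod_ne_zero_iff.1 (haz (k + 1)) k (Finset.self_mem_range_succ k)
  -- rewrite finite products as E
  have hEa : ∀ (w : ℂ) (n : ℕ), (∏ k ∈ Finset.range n, (1 - w * q ^ k)) = E q w n :=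
    fun _ _ => rfl
  have hQe : ∀ n : ℕ, (∏ k ∈ Finset.range n, (1 - q ^ (k + 1))) = E q q n := by
    intro n
    rw [E]
    apply Finset.prod_congr rfl
    intro k _
    rw [pow_succ']
  simp only [hQe, hEa] at *
  -- abbreviations
  set Tb := ∏' k : ℕ, (1 - b * q ^ k) with hTb
  set Tc := ∏' k : ℕ, (1 - c * q ^ k) with hTc
  set Tz := ∏' k : ℕ, (1 - z * q ^ k) with hTz
  set Taz := ∏' k : ℕ, (1 - a * z * q ^ k) with hTaz
  have hEq_ne : ∀ n, E q q n ≠ 0 := E_q_ne hfq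
  have hEc_ne : ∀ n, E q c n ≠ 0 := fun n => Finset.prod_ne_zero_iff.2 fun k _ => hfc k
  have hEaz_ne : ∀ n, E q (a * z) n ≠ 0 := fun n =>
    Finset.prod_ne_zero_iff.2 fun k _ => hfaz k
  have hEz_ne : ∀ n, E q z n ≠ 0 := fun n =>
    Finset.prod_ne_zero_iff.2 fun k _ => fact_small hq hz k
  have hbqn : ∀ n : ℕ, ‖b * q ^ n‖ < 1 := by
    intro n
    rw [norm_mul, norm_pow]
    have h1 : ‖q‖ ^ n ≤ 1 := pow_le_one₀ (norm_nonneg q) hq.le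
    nlinarith [norm_nonneg b]
  have hzqm : ∀ m : ℕ, ‖z * q ^ m‖ < 1 := by
    intro m
    rw [norm_mul, norm_pow]
    have h1 : ‖q‖ ^ m ≤ 1 := pow_le_one₀ (norm_nonneg q) hq.le
    nlinarith [norm_nonneg z]
  have hTbqn_ne : ∀ n : ℕ, (∏' k : ℕ, (1 - (b * q ^ n) * q ^ k)) ≠ 0 := fun n =>
    tprod_ne hq (fact_small hq (hbqn n))
  have hTzqm_ne : ∀ m : ℕ, (∏' k : ℕ, (1 - (z * q ^ m) * q ^ k)) ≠ 0 := fun m =>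
    tprod_ne hq (fact_small hq (hzqm m))
  -- step 1 : termwise transformation of LHS
  have hqb1 : ∀ n : ℕ, (∏' k : ℕ, (1 - (b * q ^ n) * q ^ k)) * Sf q (c / b) (b * q ^ n)
      = ∏' k : ℕ, (1 - (c * q ^ n) * q ^ k) := by
    intro n
    have h := qbinom hq hfq (c / b) (hbqn n)
    have he : c / b * (b * q ^ n) = c * q ^ n := by
      field_simp
    rw [he] at h
    exact h
  have step1 : ∀ n : ℕ, E q a n * E q b n * z ^ n / (E q q n * E q c n)
      = Tb / Tc * ((E q a n * z ^ n / E q q n) * Sf q (c / b) (b * q ^ n)) := by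
    intro n
    have h1 : Tc = E q c n * ∏' k : ℕ, (1 - (c * q ^ n) * q ^ k) := tprod_split hq c n
    have h2 : Tb = E q b n * ∏' k : ℕ, (1 - (b * q ^ n) * q ^ k) := tprod_split hq b n
    rw [← hqb1 n] at h1
    have hS : Sf q (c / b) (b * q ^ n)
        = Tc / (E q c n * ∏' k : ℕ, (1 - (b * q ^ n) * q ^ k)) := by
      rw [h1]
      field_simp [hEc_ne n, hTbqn_ne n]
    rw [hS, h2]
    field_simp [hEq_ne n, hEc_ne n, hcinf, hTbqn_ne n]
  -- the double-sum family
  set F := fun p : ℕ × ℕ =>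
    (E q a p.1 * (z * q ^ p.2) ^ p.1 / E q q p.1) *
      (E q (c / b) p.2 * b ^ p.2 / E q q p.2) with hF
  obtain ⟨δ, hδ, hδle⟩ := E_lower hq hfq
  have hnorm1 : ∀ (w t : ℂ) (n : ℕ), ‖t‖ ≤ 1 →
      ‖E q w n * t ^ n / E q q n‖ ≤ Real.exp (‖w‖ / (1 - ‖q‖)) / δ * ‖t‖ ^ n := by
    intro w t n ht1
    rw [norm_div, norm_mul, norm_pow]
    rw [div_mul_eq_mul_div, div_le_div_iff₀ (norm_pos_iff.2 (hEq_ne n)) hδ]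
    exact mul_le_mul (mul_le_mul_of_nonneg_right (E_norm_le hq w n) (by positivity))
      (hδle n) hδ.le (by positivity)
  have hgsum : Summable (fun x : ℕ × ℕ =>
      (fun n : ℕ => Real.exp (‖a‖ / (1 - ‖q‖)) / δ * ‖z‖ ^ n) x.1 *
      (fun m : ℕ => Real.exp (‖c / b‖ / (1 - ‖q‖)) / δ * ‖b‖ ^ m) x.2) :=
    Summable.mul_of_nonneg
      ((summable_geometric_of_lt_one (norm_nonneg z) hz).mul_left _)
      ((summable_geometric_of_lt_one (norm_nonneg b) hb).mul_left _)
      (fun n => by positivity) (fun m => by positivity)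
  have hFsum : Summable F := by
    apply Summable.of_norm_bounded hgsum
    rintro ⟨n, m⟩
    simp only [hF, norm_mul]
    apply mul_le_mul
    · calc ‖E q a n * (z * q ^ m) ^ n / E q q n‖
            ≤ Real.exp (‖a‖ / (1 - ‖q‖)) / δ * ‖z * q ^ m‖ ^ n :=
              hnorm1 a (z * q ^ m) n (hzqm m).le
          _ ≤ Real.exp (‖a‖ / (1 - ‖q‖)) / δ * ‖z‖ ^ n := by
            apply mul_le_mul_of_nonneg_left _ (by positivity)
            apply pow_le_pow_left₀ (norm_nonneg _)
            rw [norm_mul, norm_pow]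
            have h1 : ‖q‖ ^ m ≤ 1 := pow_le_one₀ (norm_nonneg q) hq.le
            nlinarith [norm_nonneg z]
    · exact hnorm1 (c / b) b m hb.le
    · exact norm_nonneg _
    · positivity
  -- summability of each LHS row in m (for fixed n)
  have hrow : ∀ n : ℕ, Summable (fun m => F (n, m)) := fun n => hFsum.prod_factor n
  have hcol : ∀ m : ℕ, Summable (fun n => F (n, m)) := by
    intro m
    exact (hFsum.prod_symm).prod_factor m
  -- Sf as inner sum over m
  have hSf_eq : ∀ n : ℕ, (E q a n * z ^ n / E q q n) * Sf q (c / b) (b * q ^ n)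
      = ∑' m : ℕ, F (n, m) := by
    intro n
    rw [Sf, ← tsum_mul_left]
    apply tsum_congr
    intro m
    simp only [hF, cE]
    have hpow : ((q : ℂ) ^ n) ^ m = (q ^ m) ^ n := by
      rw [← pow_mul, ← pow_mul, mul_comm]
    rw [mul_pow, mul_pow, hpow]
    field_simp [hEq_ne n, hEq_ne m]
  -- LHS = (Tb/Tc) * double sum
  have lhs_eq : (∑' n : ℕ, E q a n * E q b n * z ^ n / (E q q n * E q c n))
      = Tb / Tc * ∑' n : ℕ, ∑' m : ℕ, F (n, m) := by
    rw [← tsum_mul_left]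
    apply tsum_congr
    intro n
    rw [step1 n, hSf_eq n]
  -- swap
  have hswap : (∑' n : ℕ, ∑' m : ℕ, F (n, m)) = ∑' m : ℕ, ∑' n : ℕ, F (n, m) := by
    have h := Summable.tsum_comm (f := fun n m => F (n, m)) (by exact hFsum)
    exact h.symm
  -- inner n-sum
  have step3 : ∀ m : ℕ, (∑' n : ℕ, F (n, m))
      = (E q (c / b) m * b ^ m / E q q m) * Sf q a (z * q ^ m) := by
    intro m
    rw [Sf, ← tsum_mul_left]
    apply tsum_congr
    intro n
    simp only [hF, cE]
    field_simp [hEq_ne n, hEq_ne m]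
  -- evaluate Sf q a (z*q^m)
  have step4 : ∀ m : ℕ, Sf q a (z * q ^ m)
      = Taz * E q z m / (Tz * E q (a * z) m) := by
    intro m
    have h := qbinom hq hfq a (hzqm m)
    have he : (fun k : ℕ => 1 - a * (z * q ^ m) * q ^ k)
        = fun k : ℕ => 1 - (a * z * q ^ m) * q ^ k := by
      funext k; ring_nf
    rw [show a * (z * q ^ m) = (a * z) * q ^ m by ring] at h
    have hsz : Tz = E q z m * ∏' k : ℕ, (1 - (z * q ^ m) * q ^ k) := tprod_split hq z m
    have hsaz : Taz = E q (a * z) m * ∏' k : ℕ, (1 - (a * z * q ^ m) * q ^ k) :=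
      tprod_split hq (a * z) m
    rw [show (a * z) * q ^ m = a * z * q ^ m by ring] at h
    rw [hsaz, hsz, ← h]
    field_simp [hEz_ne m, hEaz_ne m, hTzqm_ne m]
    have hza : E q (z * a) m ≠ 0 := by rw [mul_comm z a]; exact hEaz_ne m
    ring_nf
    rw [mul_assoc, mul_inv_cancel₀ hza, mul_one]
  -- final termwise identity
  have step5 : ∀ m : ℕ, (E q (c / b) m * b ^ m / E q q m) *
      (Taz * E q z m / (Tz * E q (a * z) m))
      = (Taz / Tz) * (E q (c / b) m * E q z m * b ^ m / (E q q m * E q (a * z) m)) := by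
    intro m
    field_simp [hEq_ne m, hEaz_ne m, hzinf]
  calc (∑' n : ℕ, E q a n * E q b n * z ^ n / (E q q n * E q c n))
      = Tb / Tc * ∑' n : ℕ, ∑' m : ℕ, F (n, m) := lhs_eq
    _ = Tb / Tc * ∑' m : ℕ, ∑' n : ℕ, F (n, m) := by rw [hswap]
    _ = Tb / Tc * ∑' m : ℕ, (Taz / Tz) *
          (E q (c / b) m * E q z m * b ^ m / (E q q m * E q (a * z) m)) := by
        congr 1
        apply tsum_congr
        intro m
        rw [step3 m, step4 m, step5 m]
    _ = Tb * Taz / (Tc * Tz) *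
          ∑' m : ℕ, E q (c / b) m * E q z m * b ^ m / (E q q m * E q (a * z) m) := by
        rw [tsum_mul_left, ← mul_assoc, div_mul_div_comm]
end

section
/- For every integer k ≥ 1, the formal power series identity ∑_{n≥0} q^{2n} (q^{2n+2};q²)_∞ (q^{2n+2k};q²)_∞ / (q^{2n+1};q²)_∞² = ((q²;q²)_∞² / ((q;q²)_∞² (q²;q²)_{k-1})) · ∑_{n≥0} (q;q²)_n² q^{2n} / ((q²;q²)_n (q^{2k};q²)_n) holds. -/
open Finset PowerSeries

/-- `(q^a; q^2)_∞ = ∏_{j≥0} (1 - q^(a+2j))` (for `a ≥ 1`) as a formal power series. -/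
noncomputable def P2inf (a : ℕ) : PowerSeries ℚ :=
  PowerSeries.mk fun m => PowerSeries.coeff m (P2 a (m + 1))

/-- The Andrews–El Bachraoui series
`F_{k,1}(q) = ∑_{n≥0} q^{2n} (q^{2n+2};q²)_∞ (q^{2n+2k};q²)_∞ / (q^{2n+1};q²)_∞²`,
defined coefficientwise. -/
noncomputable def AEB (k : ℕ) : PowerSeries ℚ :=
  PowerSeries.mk fun m => ∑ n ∈ Finset.range (m + 1),
    PowerSeries.coeff m
      ((PowerSeries.X : PowerSeries ℚ) ^ (2 * n) * P2inf (2 * n + 2) *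
        P2inf (2 * n + 2 * k) * (P2inf (2 * n + 1) ^ 2)⁻¹)



lemma P2_add (a n M : ℕ) : P2 a (n + M) = P2 a n * P2 (a + 2 * n) M := by
  unfold P2
  rw [Finset.prod_range_add]
  congr 1
  refine Finset.prod_congr rfl fun j _ => ?_
  congr 2
  ring

lemma coeff_P2_stab (a m N M : ℕ) (ha : 1 ≤ a) (hN : m ≤ N) (hNM : N ≤ M) :
    PowerSeries.coeff m (P2 a M) = PowerSeries.coeff m (P2 a N) := by
  induction M, hNM using Nat.le_induction with
  | base => rfl
  | succ M hM ih =>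
    have : P2 a (M + 1) = P2 a M * (1 - X ^ (a + 2 * M)) := Finset.prod_range_succ _ _
    rw [this, mul_sub, mul_one, map_sub, PowerSeries.coeff_mul_X_pow',
      if_neg (by omega), sub_zero, ih]

lemma constantCoeff_P2 (a n : ℕ) (ha : 1 ≤ a) : PowerSeries.constantCoeff (P2 a n) = 1 := by
  unfold P2
  rw [map_prod]
  refine Finset.prod_eq_one fun j _ => ?_
  rw [map_sub, map_one, map_pow, PowerSeries.constantCoeff_X, zero_pow (by omega), sub_zero]

lemma constantCoeff_P2inf (a : ℕ) (ha : 1 ≤ a) : PowerSeries.constantCoeff (P2inf a) = 1 := by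
  rw [← PowerSeries.coeff_zero_eq_constantCoeff_apply]
  rw [P2inf, PowerSeries.coeff_mk, PowerSeries.coeff_zero_eq_constantCoeff_apply]
  exact constantCoeff_P2 a 1 ha

lemma P2inf_split (a b n : ℕ) (ha : 1 ≤ a) (hb : b = a + 2 * n) :
    P2 a n * P2inf b = P2inf a := by
  subst hb
  ext m
  rw [PowerSeries.coeff_mul]
  have h1 : ∀ p ∈ Finset.HasAntidiagonal.antidiagonal m,
      PowerSeries.coeff p.1 (P2 a n) * PowerSeries.coeff p.2 (P2inf (a + 2 * n)) =
      PowerSeries.coeff p.1 (P2 a n) * PowerSeries.coeff p.2 (P2 (a + 2 * n) (m + 1)) := by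
    intro p hp
    have hpm : p.2 ≤ m := by
      have := Finset.HasAntidiagonal.mem_antidiagonal.mp hp; omega
    rw [P2inf, PowerSeries.coeff_mk,
      coeff_P2_stab (a + 2 * n) p.2 (p.2 + 1) (m + 1) (by omega) (by omega) (by omega)]
  rw [Finset.sum_congr rfl h1, ← PowerSeries.coeff_mul, ← P2_add,
    P2inf, PowerSeries.coeff_mk,
    coeff_P2_stab a m (m + 1) (n + (m + 1)) ha (by omega) (by omega)]

lemma cancel3 (A B u v w : PowerSeries ℚ) (hu : u * u⁻¹ = 1) (hv : v * v⁻¹ = 1)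
    (hw : w * w⁻¹ = 1) (h : A * (w * v) = B * u) :
    A * u⁻¹ = B * w⁻¹ * v⁻¹ := by
  calc A * u⁻¹ = A * u⁻¹ * (v * v⁻¹) * (w * w⁻¹) := by rw [hv, hw, mul_one, mul_one]
    _ = (A * (w * v)) * (u⁻¹ * v⁻¹ * w⁻¹) := by ring
    _ = (B * u) * (u⁻¹ * v⁻¹ * w⁻¹) := by rw [h]
    _ = B * w⁻¹ * v⁻¹ * (u * u⁻¹) := by ring
    _ = B * w⁻¹ * v⁻¹ := by rw [hu, mul_one]

lemma term_eq (k n : ℕ) (hk : 1 ≤ k) :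
    (PowerSeries.X : PowerSeries ℚ) ^ (2 * n) * P2inf (2 * n + 2) *
        P2inf (2 * n + 2 * k) * (P2inf (2 * n + 1) ^ 2)⁻¹ =
    P2inf 2 ^ 2 * (P2inf 1 ^ 2 * P2 2 (k - 1))⁻¹ *
      (P2 1 n ^ 2 * (PowerSeries.X : PowerSeries ℚ) ^ (2 * n) *
        (P2 2 n * P2 (2 * k) n)⁻¹) := by
  have h1 : P2 2 n * P2inf (2 * n + 2) = P2inf 2 := P2inf_split 2 _ n (by omega) (by omega)
  have h2 : P2 (2 * k) n * P2inf (2 * n + 2 * k) = P2inf (2 * k) :=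
    P2inf_split (2 * k) _ n (by omega) (by omega)
  have h3 : P2 2 (k - 1) * P2inf (2 * k) = P2inf 2 := P2inf_split 2 _ (k - 1) (by omega) (by omega)
  have h4 : P2 1 n * P2inf (2 * n + 1) = P2inf 1 := P2inf_split 1 _ n (by omega) (by omega)
  have hu : (P2inf (2 * n + 1) ^ 2) * (P2inf (2 * n + 1) ^ 2)⁻¹ = 1 :=
    PowerSeries.mul_inv_cancel _ (by
      rw [map_pow, constantCoeff_P2inf _ (by omega)]; norm_num)
  have hw : (P2inf 1 ^ 2 * P2 2 (k - 1)) * (P2inf 1 ^ 2 * P2 2 (k - 1))⁻¹ = 1 :=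
    PowerSeries.mul_inv_cancel _ (by
      rw [map_mul, map_pow, constantCoeff_P2inf _ (by omega), constantCoeff_P2 _ _ (by omega)]
      norm_num)
  have hv : (P2 2 n * P2 (2 * k) n) * (P2 2 n * P2 (2 * k) n)⁻¹ = 1 :=
    PowerSeries.mul_inv_cancel _ (by
      rw [map_mul, constantCoeff_P2 _ _ (by omega), constantCoeff_P2 _ _ (by omega)]; norm_num)
  have key : ((PowerSeries.X : PowerSeries ℚ) ^ (2 * n) * P2inf (2 * n + 2) *
      P2inf (2 * n + 2 * k)) * ((P2inf 1 ^ 2 * P2 2 (k - 1)) * (P2 2 n * P2 (2 * k) n)) =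
      (P2inf 2 ^ 2 * (P2 1 n ^ 2 * (PowerSeries.X : PowerSeries ℚ) ^ (2 * n))) *
        (P2inf (2 * n + 1) ^ 2) := by
    have e1 : ((PowerSeries.X : PowerSeries ℚ) ^ (2 * n) * P2inf (2 * n + 2) *
        P2inf (2 * n + 2 * k)) * ((P2inf 1 ^ 2 * P2 2 (k - 1)) * (P2 2 n * P2 (2 * k) n)) =
        (P2 2 n * P2inf (2 * n + 2)) *
          (P2 2 (k - 1) * (P2 (2 * k) n * P2inf (2 * n + 2 * k))) *
          (P2inf 1 ^ 2 * (PowerSeries.X : PowerSeries ℚ) ^ (2 * n)) := by ring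
    rw [e1, h1, h2, h3, ← h4]
    ring
  have := cancel3 _ _ _ _ _ hu hv hw key
  calc (PowerSeries.X : PowerSeries ℚ) ^ (2 * n) * P2inf (2 * n + 2) *
        P2inf (2 * n + 2 * k) * (P2inf (2 * n + 1) ^ 2)⁻¹
      = ((PowerSeries.X : PowerSeries ℚ) ^ (2 * n) * P2inf (2 * n + 2) *
        P2inf (2 * n + 2 * k)) * (P2inf (2 * n + 1) ^ 2)⁻¹ := by ring
    _ = (P2inf 2 ^ 2 * (P2 1 n ^ 2 * (PowerSeries.X : PowerSeries ℚ) ^ (2 * n))) *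
        (P2inf 1 ^ 2 * P2 2 (k - 1))⁻¹ * (P2 2 n * P2 (2 * k) n)⁻¹ := this
    _ = _ := by ring

/-- For every `k ≥ 1`,
`F_{k,1}(q) = ((q²;q²)_∞² / ((q;q²)_∞² (q²;q²)_{k-1}))
  · ∑_{n≥0} (q;q²)_n² q^{2n} / ((q²;q²)_n (q^{2k};q²)_n)`
as formal power series (the `₂φ₁` sum is defined coefficientwise, its `n`-th term
having order at least `2n`). -/
theorem stmt_16 (k : ℕ) (hk : 1 ≤ k) :
    AEB k = P2inf 2 ^ 2 * (P2inf 1 ^ 2 * P2 2 (k - 1))⁻¹ *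
      PowerSeries.mk fun m => ∑ n ∈ Finset.range (m + 1),
        PowerSeries.coeff m
          (P2 1 n ^ 2 * (PowerSeries.X : PowerSeries ℚ) ^ (2 * n) *
            (P2 2 n * P2 (2 * k) n)⁻¹) := by
  set pref := P2inf 2 ^ 2 * (P2inf 1 ^ 2 * P2 2 (k - 1))⁻¹ with hpref
  have hS0 : ∀ q n : ℕ, q < 2 * n →
      PowerSeries.coeff q (P2 1 n ^ 2 * (PowerSeries.X : PowerSeries ℚ) ^ (2 * n) *
        (P2 2 n * P2 (2 * k) n)⁻¹) = 0 := by
    intro q n hqn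
    have e : P2 1 n ^ 2 * (PowerSeries.X : PowerSeries ℚ) ^ (2 * n) *
        (P2 2 n * P2 (2 * k) n)⁻¹ =
        (P2 1 n ^ 2 * (P2 2 n * P2 (2 * k) n)⁻¹) * (PowerSeries.X : PowerSeries ℚ) ^ (2 * n) := by
      ring
    rw [e, PowerSeries.coeff_mul_X_pow', if_neg (by omega)]
  ext m
  rw [AEB, PowerSeries.coeff_mk]
  have step1 : ∀ n ∈ Finset.range (m + 1),
      PowerSeries.coeff m
        ((PowerSeries.X : PowerSeries ℚ) ^ (2 * n) * P2inf (2 * n + 2) *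
          P2inf (2 * n + 2 * k) * (P2inf (2 * n + 1) ^ 2)⁻¹) =
      PowerSeries.coeff m
        (pref * (P2 1 n ^ 2 * (PowerSeries.X : PowerSeries ℚ) ^ (2 * n) *
          (P2 2 n * P2 (2 * k) n)⁻¹)) := by
    intro n _
    rw [term_eq k n hk, hpref, mul_assoc]
  rw [Finset.sum_congr rfl step1]
  calc (∑ n ∈ Finset.range (m + 1), PowerSeries.coeff m
          (pref * (P2 1 n ^ 2 * (PowerSeries.X : PowerSeries ℚ) ^ (2 * n) *
            (P2 2 n * P2 (2 * k) n)⁻¹)))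
      = PowerSeries.coeff m (pref * ∑ n ∈ Finset.range (m + 1),
          (P2 1 n ^ 2 * (PowerSeries.X : PowerSeries ℚ) ^ (2 * n) *
            (P2 2 n * P2 (2 * k) n)⁻¹)) := by
        rw [Finset.mul_sum, map_sum]
    _ = ∑ p ∈ Finset.HasAntidiagonal.antidiagonal m, PowerSeries.coeff p.1 pref *
          PowerSeries.coeff p.2 (∑ n ∈ Finset.range (m + 1),
            (P2 1 n ^ 2 * (PowerSeries.X : PowerSeries ℚ) ^ (2 * n) *
              (P2 2 n * P2 (2 * k) n)⁻¹)) := PowerSeries.coeff_mul _ _ _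
    _ = ∑ p ∈ Finset.HasAntidiagonal.antidiagonal m, PowerSeries.coeff p.1 pref *
          (∑ n ∈ Finset.range (p.2 + 1), PowerSeries.coeff p.2
            (P2 1 n ^ 2 * (PowerSeries.X : PowerSeries ℚ) ^ (2 * n) *
              (P2 2 n * P2 (2 * k) n)⁻¹)) := by
        refine Finset.sum_congr rfl fun p hp => ?_
        have hpm : p.2 ≤ m := by
          have := Finset.HasAntidiagonal.mem_antidiagonal.mp hp; omega
        rw [map_sum]
        congr 1
        refine (Finset.sum_subset (Finset.range_subset_range.mpr (by omega)) ?_).symm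
        intro n hn hn2
        simp only [Finset.mem_range] at hn hn2
        exact hS0 p.2 n (by omega)
    _ = PowerSeries.coeff m (pref * PowerSeries.mk fun m => ∑ n ∈ Finset.range (m + 1),
          PowerSeries.coeff m
            (P2 1 n ^ 2 * (PowerSeries.X : PowerSeries ℚ) ^ (2 * n) *
              (P2 2 n * P2 (2 * k) n)⁻¹)) := by
        rw [PowerSeries.coeff_mul]
        simp only [PowerSeries.coeff_mk]
end
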